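/- arXiv:2109.01022 — 8 statements merged into one kernel-verified Lean document; each statement's English description precedes it below -/
import Mathlib

section
/- Let N ≥ 2 be a natural number and let angles 0 = θ₁ < θ₂ < … < θ_N < π be given. Then ⋂_{k=1}^{N} 𝓝 R_{θ_k}ᵀ = SO(2) if and only if there exists n ∈ {1,…,N−1} such that θ_n ≤ π/2 ≤ θ_{n+1} and θ_{n+1} − θ_n ≤ π/2. -/
open Matrix Real Set MeasureTheory

noncomputable section

/-- The space of real 2×2 matrices. -/
abbrev M2 : Type := Matrix (Fin 2) (Fin 2) ℝ

/-- Euclidean norm on ℝ². -/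
def enorm2 (v : Fin 2 → ℝ) : ℝ := Real.sqrt ((v 0) ^ 2 + (v 1) ^ 2)

/-- Rotation matrix by angle θ. -/
def rot (θ : ℝ) : M2 := !![Real.cos θ, -Real.sin θ; Real.sin θ, Real.cos θ]

/-- The set of rotations SO(2). -/
def SO2 : Set M2 := {R : M2 | ∃ θ : ℝ, R = rot θ}

def e1 : Fin 2 → ℝ := ![1, 0]
def e2 : Fin 2 → ℝ := ![0, 1]

/-- Perpendicular vector w⊥ = (−w₂, w₁). -/
def perp (w : Fin 2 → ℝ) : Fin 2 → ℝ := ![-(w 1), w 0]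

/-- 𝓜_s = {F : det F = 1 and ‖F s‖ = 1}. -/
def calM (s : Fin 2 → ℝ) : Set M2 := {F : M2 | F.det = 1 ∧ enorm2 (F.mulVec s) = 1}

/-- 𝓝_s = {F : det F = 1 and ‖F s‖ ≤ 1}. -/
def calN (s : Fin 2 → ℝ) : Set M2 := {F : M2 | F.det = 1 ∧ enorm2 (F.mulVec s) ≤ 1}

namespace TaylorProof

lemma det_rot (ψ : ℝ) : (rot ψ).det = 1 := by
  rw [rot, Matrix.det_fin_two_of]
  nlinarith [Real.sin_sq_add_cos_sq ψ]

lemma sqrt_le_one_iff {x : ℝ} (hx : 0 ≤ x) : Real.sqrt x ≤ 1 ↔ x ≤ 1 := by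
  constructor
  · intro h
    nlinarith [Real.sq_sqrt hx, Real.sqrt_nonneg x]
  · intro h
    rw [show (1:ℝ) = Real.sqrt 1 by simp]
    exact Real.sqrt_le_sqrt h

lemma mem_calN_rot_iff (F : M2) (φ : ℝ) :
    F * rot φ ∈ calN e1 ↔ F.det = 1 ∧
      (F 0 0 * Real.cos φ + F 0 1 * Real.sin φ)^2
        + (F 1 0 * Real.cos φ + F 1 1 * Real.sin φ)^2 ≤ 1 := by
  have h1 : (F * rot φ).det = F.det := by rw [Matrix.det_mul, det_rot, mul_one]
  have h2 : (F * rot φ).mulVec e1 =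
      ![F 0 0 * Real.cos φ + F 0 1 * Real.sin φ,
        F 1 0 * Real.cos φ + F 1 1 * Real.sin φ] := by
    funext i
    fin_cases i <;>
      simp [Matrix.mulVec, Matrix.mul_apply, dotProduct, Fin.sum_univ_two, rot, e1]
  constructor
  · rintro ⟨hd, hn⟩
    rw [h1] at hd
    rw [h2] at hn
    refine ⟨hd, ?_⟩
    rw [enorm2] at hn
    simp only [Matrix.cons_val_zero, Matrix.cons_val_one, Matrix.head_cons] at hn
    exact (sqrt_le_one_iff (by positivity)).mp hn
  · rintro ⟨hd, hn⟩
    refine ⟨by rw [h1]; exact hd, ?_⟩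
    rw [h2, enorm2]
    simp only [Matrix.cons_val_zero, Matrix.cons_val_one, Matrix.head_cons]
    exact (sqrt_le_one_iff (by positivity)).mpr hn

lemma rot_mul (a b : ℝ) : rot a * rot b = rot (a + b) := by
  ext i j
  fin_cases i <;> fin_cases j <;>
    simp [rot, Matrix.mul_apply, Fin.sum_univ_two, Real.cos_add, Real.sin_add] <;> ring

lemma mono_of (N : ℕ) (θ : ℕ → ℝ) (hmono : ∀ k, 1 ≤ k → k < N → θ k < θ (k+1)) :
    ∀ k l, 1 ≤ k → k ≤ l → l ≤ N → θ k ≤ θ l := by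
  intro k l hk hkl hlN
  induction l with
  | zero => omega
  | succ m ih =>
    rcases Nat.eq_or_lt_of_le hkl with h | h
    · rw [h]
    · have hkm : k ≤ m := by omega
      exact le_trans (ih hkm (by omega)) (le_of_lt (hmono m (by omega) (by omega)))

lemma sin_sq_le_sin_sq {u d : ℝ} (h1 : |u| ≤ d) (h2 : d ≤ π/2) :
    Real.sin u ^ 2 ≤ Real.sin d ^ 2 := by
  have h0 : 0 ≤ d := le_trans (abs_nonneg u) h1
  have habs : 0 ≤ |u| := abs_nonneg u
  have hc : Real.cos (2*d) ≤ Real.cos (2*|u|) :=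
    Real.cos_le_cos_of_nonneg_of_le_pi (by positivity) (by linarith) (by linarith)
  have e1 : Real.cos (2*d) = 1 - 2 * Real.sin d ^ 2 := by
    rw [Real.cos_two_mul]; linear_combination 2 * Real.sin_sq_add_cos_sq d
  have e2 : Real.cos (2*|u|) = 1 - 2 * Real.sin u ^ 2 := by
    rw [Real.cos_two_mul]
    have hcc : Real.cos |u| ^ 2 = Real.cos u ^ 2 := by
      rcases abs_choice u with h | h <;> rw [h] <;> simp [Real.cos_neg]
    rw [hcc]; linear_combination 2 * Real.sin_sq_add_cos_sq u
  linarith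

lemma half_pi_lt {d : ℝ} (h0 : 0 ≤ d) (h1 : d ≤ π) (h : Real.cos d < 0) : π/2 < d := by
  by_contra h'
  push_neg at h'
  have := Real.cos_nonneg_of_mem_Icc (x := d) ⟨by linarith [Real.pi_nonneg], h'⟩
  linarith

lemma gap_lemma (N : ℕ) (hN : 2 ≤ N) (x : ℕ → ℝ) (γ : ℝ)
    (hgap : ∀ k, 1 ≤ k → k < N → x (k+1) - x k ≤ π)
    (hwrap : x 1 + 2*π - x N ≤ π)
    (hneg : ∀ k, 1 ≤ k → k ≤ N → Real.cos (x k - γ) < 0) : False := by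
  have hπ : 0 < π := Real.pi_pos
  set n : ℤ := ⌊(γ - x 1)/(2*π)⌋ with hn
  set γ' : ℝ := γ - n * (2*π) with hγ'
  have hγ'1 : x 1 ≤ γ' := by
    have h := Int.floor_le ((γ - x 1)/(2*π))
    rw [← hn] at h
    have h2 : (n : ℝ) * (2*π) ≤ γ - x 1 := (le_div_iff₀ (by positivity)).mp h
    simp only [hγ']; linarith
  have hγ'2 : γ' < x 1 + 2*π := by
    have h := Int.lt_floor_add_one ((γ - x 1)/(2*π))
    rw [← hn] at h
    have h2 : γ - x 1 < ((n : ℝ) + 1) * (2*π) := (div_lt_iff₀ (by positivity)).mp h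
    simp only [hγ']; push_cast at h2 ⊢; nlinarith
  have hcos : ∀ t : ℝ, Real.cos (t - γ') = Real.cos (t - γ) := by
    intro t
    have : t - γ' = (t - γ) + n * (2*π) := by rw [hγ']; ring
    rw [this, Real.cos_add_int_mul_two_pi]
  classical
  set S := (Finset.Icc 1 N).filter (fun k => x k ≤ γ') with hS
  have h1S : (1:ℕ) ∈ S := by
    simp only [hS, Finset.mem_filter, Finset.mem_Icc]
    exact ⟨⟨le_refl 1, by omega⟩, hγ'1⟩
  have hSne : S.Nonempty := ⟨1, h1S⟩
  set m := S.max' hSne with hm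
  have hmS := S.max'_mem hSne
  rw [← hm] at hmS
  simp only [hS, Finset.mem_filter, Finset.mem_Icc] at hmS
  obtain ⟨⟨hm1, hmN⟩, hmle⟩ := hmS
  rcases eq_or_lt_of_le hmN with hcase | hcase
  · -- m = N
    rw [hcase] at hmle
    have hd1a : 0 ≤ γ' - x N := by linarith
    have hd1b : γ' - x N ≤ π := by linarith
    have hc1 : Real.cos (γ' - x N) < 0 := by
      rw [show γ' - x N = -(x N - γ') by ring, Real.cos_neg, hcos]
      exact hneg N (by omega) (le_refl _)
    have hg1 := half_pi_lt hd1a hd1b hc1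
    have hd2a : 0 ≤ x 1 + 2*π - γ' := by linarith
    have hd2b : x 1 + 2*π - γ' ≤ π := by linarith
    have hc2 : Real.cos (x 1 + 2*π - γ') < 0 := by
      rw [show x 1 + 2*π - γ' = (x 1 - γ') + 2*π by ring, Real.cos_add_two_pi, hcos]
      exact hneg 1 (le_refl 1) (by omega)
    have hg2 := half_pi_lt hd2a hd2b hc2
    linarith
  · -- m < N
    have hnotS : (m+1) ∉ S := by
      intro hmem
      have := S.le_max' (m+1) hmem
      omega
    have hlt : γ' < x (m+1) := by
      by_contra hcon
      push_neg at hcon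
      exact hnotS (by simp only [hS, Finset.mem_filter, Finset.mem_Icc]; exact ⟨⟨by omega, by omega⟩, hcon⟩)
    have hgapm := hgap m hm1 hcase
    have hd1a : 0 ≤ γ' - x m := by linarith
    have hd1b : γ' - x m ≤ π := by linarith
    have hc1 : Real.cos (γ' - x m) < 0 := by
      rw [show γ' - x m = -(x m - γ') by ring, Real.cos_neg, hcos]
      exact hneg m hm1 (by omega)
    have hg1 := half_pi_lt hd1a hd1b hc1
    have hd2a : 0 ≤ x (m+1) - γ' := by linarith
    have hd2b : x (m+1) - γ' ≤ π := by linarith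
    have hc2 : Real.cos (x (m+1) - γ') < 0 := by
      rw [hcos]; exact hneg (m+1) (by omega) (by omega)
    have hg2 := half_pi_lt hd2a hd2b hc2
    linarith

lemma key_lemma (N : ℕ) (hN : 2 ≤ N) (θ : ℕ → ℝ) (hθ1 : θ 1 = 0)
    (hθNge : π/2 ≤ θ N)
    (hgap : ∀ k, 1 ≤ k → k < N → θ (k+1) - θ k ≤ π/2)
    (a b c : ℝ) (ha : 0 ≤ a) (hdet : a*c - b^2 = 1)
    (hq : ∀ k, 1 ≤ k → k ≤ N →
      a * Real.cos (θ k)^2 + 2*b*Real.cos (θ k)*Real.sin (θ k) + c * Real.sin (θ k)^2 ≤ 1) :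
    a = 1 ∧ b = 0 ∧ c = 1 := by
  have hac : a * c = 1 + b^2 := by linarith
  have hapos : 0 < a := by
    rcases eq_or_lt_of_le ha with h | h
    · exfalso; rw [← h] at hac; nlinarith [sq_nonneg b]
    · exact h
  have hcpos : 0 < c := by nlinarith
  by_cases hm : a + c ≤ 2
  · constructor
    · nlinarith [sq_nonneg (a - c), sq_nonneg (a + c - 2), sq_nonneg b]
    constructor
    · nlinarith [sq_nonneg (a - c), sq_nonneg (a + c - 2), sq_nonneg b]
    · nlinarith [sq_nonneg (a - c), sq_nonneg (a + c - 2), sq_nonneg b]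
  · exfalso
    push_neg at hm
    set m : ℝ := (a + c)/2 with hmdef
    set p : ℝ := (a - c)/2 with hpdef
    have hm1 : 1 < m := by rw [hmdef]; linarith
    have hr2' : p^2 + b^2 = m^2 - 1 := by rw [hpdef, hmdef]; ring_nf; nlinarith
    set r : ℝ := Real.sqrt (p^2 + b^2) with hrdef
    have hr2 : r^2 = p^2 + b^2 := Real.sq_sqrt (by positivity)
    have hrpos : 0 < r := Real.sqrt_pos.mpr (by nlinarith)
    set z : ℂ := ⟨p, b⟩ with hzdef
    have hzre : z.re = p := rfl
    have hzim : z.im = b := rfl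
    have hzabs : ‖z‖ = r := by
      rw [Complex.norm_def, Complex.normSq_apply, hzre, hzim, hrdef]
      ring_nf
    have hzne : z ≠ 0 := by
      intro h
      rw [Complex.ext_iff] at h
      simp only [Complex.zero_re, Complex.zero_im, hzre, hzim] at h
      nlinarith [h.1, h.2]
    set γ : ℝ := z.arg with hγdef
    have hcosγ : Real.cos γ = p / r := by rw [hγdef, Complex.cos_arg hzne, hzre, hzabs]
    have hsinγ : Real.sin γ = b / r := by rw [hγdef, Complex.sin_arg z, hzim, hzabs]
    apply gap_lemma N hN (fun k => 2 * θ k) γ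
    · intro k hk1 hk2
      have := hgap k hk1 hk2
      linarith
    · rw [hθ1]
      linarith
    · intro k hk1 hk2
      have hqk := hq k hk1 hk2
      have hpy : Real.sin (θ k)^2 + Real.cos (θ k)^2 = 1 := Real.sin_sq_add_cos_sq (θ k)
      have hc1 : c * (Real.sin (θ k)^2 + Real.cos (θ k)^2) = c := by rw [hpy, mul_one]
      have hlin0 : (a-c)/2 * Real.cos (2 * θ k) + b * Real.sin (2 * θ k) ≤ 1 - (a+c)/2 := by
        rw [Real.cos_two_mul, Real.sin_two_mul]
        linarith [hqk, hc1]
      have hlin : p * Real.cos (2 * θ k) + b * Real.sin (2 * θ k) ≤ 1 - m := by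
        rw [hpdef, hmdef]; exact hlin0
      have hform : Real.cos (2 * θ k - γ) =
          (p * Real.cos (2 * θ k) + b * Real.sin (2 * θ k)) / r := by
        rw [Real.cos_sub, hcosγ, hsinγ]
        field_simp
      rw [hform]
      apply div_neg_of_neg_of_pos _ hrpos
      linarith

lemma so2_subset (N : ℕ) (θ : ℕ → ℝ) :
    SO2 ⊆ ⋂ k ∈ Finset.Icc 1 N, {F : M2 | F * rot (θ k) ∈ calN e1} := by
  rintro F ⟨ψ, rfl⟩
  rw [Set.mem_iInter₂]
  intro k _
  rw [Set.mem_setOf_eq, mem_calN_rot_iff]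
  refine ⟨det_rot ψ, ?_⟩
  have h00 : rot ψ 0 0 = Real.cos ψ := by simp [rot]
  have h01 : rot ψ 0 1 = -Real.sin ψ := by simp [rot]
  have h10 : rot ψ 1 0 = Real.sin ψ := by simp [rot]
  have h11 : rot ψ 1 1 = Real.cos ψ := by simp [rot]
  rw [h00, h01, h10, h11]
  have heq : (Real.cos ψ * Real.cos (θ k) + -Real.sin ψ * Real.sin (θ k)) ^ 2 +
      (Real.sin ψ * Real.cos (θ k) + Real.cos ψ * Real.sin (θ k)) ^ 2 = 1 := by
    linear_combination (Real.sin ψ^2 + Real.cos ψ^2) * Real.sin_sq_add_cos_sq (θ k) +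
      Real.sin_sq_add_cos_sq ψ
  rw [heq]

lemma construct (N : ℕ) (hN : 2 ≤ N) (θ : ℕ → ℝ) (β s : ℝ) (hs : 0 < s) (hs2 : s^2 < 1/2)
    (hcos : ∀ k, 1 ≤ k → k ≤ N → Real.cos (θ k - β)^2 ≤ s^2) :
    ∃ F : M2, F ∈ (⋂ k ∈ Finset.Icc 1 N, {G : M2 | G * rot (θ k) ∈ calN e1}) ∧ F ∉ SO2 := by
  set t : ℝ := (1 - s^2)/s^2 with htdef
  have hspos : 0 < s^2 := by positivity
  have ht1 : 1 < t := by rw [htdef, lt_div_iff₀ hspos]; linarith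
  have htpos : 0 < t := by linarith
  set l : ℝ := Real.sqrt t with hldef
  have hl2 : l^2 = t := Real.sq_sqrt (le_of_lt htpos)
  have hlnn : 0 ≤ l := Real.sqrt_nonneg t
  have hl1 : 1 < l := by nlinarith
  have hlpos : 0 < l := by linarith
  have hlne : l ≠ 0 := ne_of_gt hlpos
  have hll : l * l⁻¹ = 1 := mul_inv_cancel₀ hlne
  set cβ := Real.cos β with hcβ
  set sβ := Real.sin β with hsβ
  have hpyβ : sβ^2 + cβ^2 = 1 := Real.sin_sq_add_cos_sq β
  set F : M2 := !![l*cβ^2 + l⁻¹*sβ^2, (l - l⁻¹)*sβ*cβ;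
                   (l - l⁻¹)*sβ*cβ, l*sβ^2 + l⁻¹*cβ^2] with hF
  have hFdet : F.det = 1 := by
    rw [hF, Matrix.det_fin_two_of]
    linear_combination (sβ^2+cβ^2)^2 * hll + (sβ^2+cβ^2+1) * hpyβ
  have hF00 : F 0 0 = l*cβ^2 + l⁻¹*sβ^2 := by rw [hF]; simp
  have hF01 : F 0 1 = (l - l⁻¹)*sβ*cβ := by rw [hF]; simp
  have hF10 : F 1 0 = (l - l⁻¹)*sβ*cβ := by rw [hF]; simp
  have hF11 : F 1 1 = l*sβ^2 + l⁻¹*cβ^2 := by rw [hF]; simp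
  have hinv2 : (l⁻¹)^2 = 1/t := by
    rw [← hl2]; field_simp
  have hst : s^2 * (t + 1) = 1 := by
    rw [htdef]; field_simp; ring
  refine ⟨F, ?_, ?_⟩
  · rw [Set.mem_iInter₂]
    intro k hk
    rw [Finset.mem_Icc] at hk
    rw [Set.mem_setOf_eq, mem_calN_rot_iff, hF00, hF01, hF10, hF11]
    refine ⟨hFdet, ?_⟩
    set C := Real.cos (θ k - β) with hC
    set S := Real.sin (θ k - β) with hSdef
    have hpyk : S^2 + C^2 = 1 := Real.sin_sq_add_cos_sq (θ k - β)
    have hC2 : C^2 ≤ s^2 := hcos k hk.1 hk.2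
    have hKey : ((l*cβ^2 + l⁻¹*sβ^2) * Real.cos (θ k) + (l - l⁻¹)*sβ*cβ * Real.sin (θ k))^2 +
        ((l - l⁻¹)*sβ*cβ * Real.cos (θ k) + (l*sβ^2 + l⁻¹*cβ^2) * Real.sin (θ k))^2 =
        l^2 * C^2 + (l⁻¹)^2 * S^2 := by
      rw [hC, hSdef, Real.cos_sub, Real.sin_sub]
      linear_combination (l^2 * (Real.cos (θ k) * Real.cos β + Real.sin (θ k) * Real.sin β)^2 +
        (l⁻¹)^2 * (Real.sin (θ k) * Real.cos β - Real.cos (θ k) * Real.sin β)^2) *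
          Real.sin_sq_add_cos_sq β
    rw [hKey, hl2, hinv2]
    have h2 : t^2*C^2 + S^2 ≤ t := by
      have hmul : C^2 * ((t-1)*(t+1)) ≤ s^2 * ((t-1)*(t+1)) :=
        mul_le_mul_of_nonneg_right hC2
          (mul_nonneg (by linarith) (by linarith))
      have hst2 : s^2*((t-1)*(t+1)) = t - 1 := by linear_combination (t-1)*hst
      linarith [hmul, hst2, hpyk]
    have h4 : (1/t) * (t^2*C^2 + S^2) ≤ (1/t) * t :=
      mul_le_mul_of_nonneg_left h2 (by positivity)
    have h5 : (1/t) * t = 1 := by field_simp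
    have h7 : (1/t)*t^2 = t := by field_simp
    have h6 : (1/t)*(t^2*C^2+S^2) = t*C^2 + 1/t*S^2 := by linear_combination C^2 * h7
    linarith
  · rintro ⟨ψ, hψ⟩
    have hEq : rot ψ = !![l*cβ^2 + l⁻¹*sβ^2, (l - l⁻¹)*sβ*cβ;
                   (l - l⁻¹)*sβ*cβ, l*sβ^2 + l⁻¹*cβ^2] := by rw [← hψ, hF]
    have h00 := congrFun (congrFun hEq 0) 0
    have h11 := congrFun (congrFun hEq 1) 1
    simp [rot] at h00 h11
    have htr : 2 * Real.cos ψ = l + l⁻¹ := by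
      linear_combination h00 + h11 + (l + l⁻¹) * hpyβ
    have hgt : 2 < l + l⁻¹ := by
      nlinarith [hll, hlpos, mul_pos (sub_pos.mpr hl1) (sub_pos.mpr hl1)]
    linarith [Real.cos_le_one ψ, htr, hgt]

lemma cos_two_mul_sin (x : ℝ) : Real.cos (2*x) = 1 - 2 * Real.sin x ^ 2 := by
  rw [Real.cos_two_mul]; linear_combination 2 * Real.sin_sq_add_cos_sq x

end TaylorProof

open TaylorProof

/-- Trivial Taylor bound: ⋂_{k=1}^N 𝓝 R_{θ_k}ᵀ = SO(2) iff there exists n ∈ {1,…,N−1}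
with θ_n ≤ π/2 ≤ θ_{n+1} and θ_{n+1} − θ_n ≤ π/2. -/
theorem stmt1 (N : ℕ) (hN : 2 ≤ N) (θ : ℕ → ℝ)
    (hθ1 : θ 1 = 0)
    (hmono : ∀ k, 1 ≤ k → k < N → θ k < θ (k + 1))
    (hθN : θ N < Real.pi) :
    (⋂ k ∈ Finset.Icc 1 N, {F : M2 | F * rot (θ k) ∈ calN e1}) = SO2 ↔
      ∃ n, 1 ≤ n ∧ n ≤ N - 1 ∧ θ n ≤ Real.pi / 2 ∧ Real.pi / 2 ≤ θ (n + 1) ∧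
        θ (n + 1) - θ n ≤ Real.pi / 2 := by
  have hmono' := mono_of N θ hmono
  have hpos : ∀ k, 1 ≤ k → k ≤ N → 0 ≤ θ k := by
    intro k h1 h2
    have := hmono' 1 k le_rfl h1 h2
    linarith [hθ1 ▸ this]
  have hleN : ∀ k, 1 ≤ k → k ≤ N → θ k ≤ θ N := fun k h1 h2 => hmono' k N h1 h2 le_rfl
  have hπ := Real.pi_pos
  constructor
  · -- equality → RHS
    intro hEq
    by_contra hR
    push_neg at hR
    have hkey : ∃ β s : ℝ, 0 < s ∧ s^2 < 1/2 ∧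
        ∀ k, 1 ≤ k → k ≤ N → Real.cos (θ k - β)^2 ≤ s^2 := by
      rcases lt_trichotomy (θ N) (π/2) with hA | hB | hC
      · -- Case A : θ N < π/2
        have hθN0 : 0 < θ N := by
          have h12 := hmono 1 le_rfl (by omega)
          have h2N := hmono' 2 N (by omega) (by omega) le_rfl
          linarith [hθ1 ▸ h12]
        refine ⟨θ N/2 - π/2, Real.sin (θ N/2), ?_, ?_, ?_⟩
        · exact Real.sin_pos_of_pos_of_lt_pi (by linarith) (by linarith)
        · have hc : 0 < Real.cos (2*(θ N/2)) :=
            Real.cos_pos_of_mem_Ioo ⟨by linarith, by linarith⟩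
          rw [cos_two_mul_sin] at hc
          linarith
        · intro k hk1 hk2
          have h0 := hpos k hk1 hk2
          have hN' := hleN k hk1 hk2
          rw [show θ k - (θ N/2 - π/2) = (θ k - θ N/2) + π/2 by ring,
            Real.cos_add_pi_div_two, neg_sq]
          exact sin_sq_le_sin_sq (abs_le.mpr ⟨by linarith, by linarith⟩) (by linarith)
      ·
        exfalso
        have hNm : N - 1 + 1 = N := by omega
        have hle : θ (N-1) ≤ π/2 := by
          have := hleN (N-1) (by omega) (by omega); linarith
        have h := hR (N-1) (by omega) le_rfl hle (by rw [hNm, hB])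
        rw [hNm, hB] at h
        have := hpos (N-1) (by omega) (by omega)
        linarith
      · -- Case B : θ N > π/2
        classical
        set Sf := (Finset.Icc 1 N).filter (fun k => θ k ≤ π/2) with hSf
        have h1S : (1:ℕ) ∈ Sf := by
          simp only [hSf, Finset.mem_filter, Finset.mem_Icc]
          exact ⟨⟨le_rfl, by omega⟩, by rw [hθ1]; linarith⟩
        have hSne : Sf.Nonempty := ⟨1, h1S⟩
        set n := Sf.max' hSne with hn
        have hnmem := Sf.max'_mem hSne
        rw [← hn] at hnmem
        simp only [hSf, Finset.mem_filter, Finset.mem_Icc] at hnmem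
        obtain ⟨⟨hn1, hnN⟩, hnle⟩ := hnmem
        have hnNe : n ≠ N := by
          intro h; rw [h] at hnle; linarith
        have hn1N : n + 1 ≤ N := by omega
        have hgt : π/2 < θ (n+1) := by
          by_contra hcon
          push_neg at hcon
          have : n + 1 ∈ Sf := by
            simp only [hSf, Finset.mem_filter, Finset.mem_Icc]
            exact ⟨⟨by omega, hn1N⟩, hcon⟩
          have := Sf.le_max' (n+1) this
          omega
        have hgap : π/2 < θ (n+1) - θ n := hR n hn1 (by omega) hnle (le_of_lt hgt)
        have hθn1N : θ (n+1) ≤ θ N := hleN (n+1) (by omega) hn1N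
        have hθn0 : 0 ≤ θ n := hpos n hn1 (by omega)
        set d : ℝ := (θ n + π - θ (n+1))/2 with hd
        have hd0 : 0 < d := by rw [hd]; linarith
        have hd4 : d < π/4 := by rw [hd]; linarith
        set μ : ℝ := (θ (n+1) + θ n + π)/2 with hμ
        refine ⟨μ - π/2, Real.sin d, ?_, ?_, ?_⟩
        · exact Real.sin_pos_of_pos_of_lt_pi hd0 (by linarith)
        · have hc : 0 < Real.cos (2*d) :=
            Real.cos_pos_of_mem_Ioo ⟨by linarith, by linarith⟩
          rw [cos_two_mul_sin] at hc
          linarith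
        · intro k hk1 hk2
          have h0 := hpos k hk1 hk2
          have hN' := hleN k hk1 hk2
          rcases le_or_gt k n with hkn | hkn
          · -- k ≤ n
            have hkθ : θ k ≤ θ n := hmono' k n hk1 hkn (by omega)
            rw [show θ k - (μ - π/2) = ((θ k + π - μ) + π/2) - π by ring,
              Real.cos_sub_pi, Real.cos_add_pi_div_two, neg_neg]
            apply sin_sq_le_sin_sq _ (by linarith)
            rw [abs_le]
            constructor
            · rw [hμ, hd]; linarith
            · rw [hμ, hd]; linarith
          · -- k ≥ n+1
            have hkθ : θ (n+1) ≤ θ k := hmono' (n+1) k (by omega) hkn hk2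
            rw [show θ k - (μ - π/2) = (θ k - μ) + π/2 by ring,
              Real.cos_add_pi_div_two, neg_sq]
            apply sin_sq_le_sin_sq _ (by linarith)
            rw [abs_le]
            constructor
            · rw [hμ, hd]; linarith
            · rw [hμ, hd]; linarith
    obtain ⟨β, s, hs, hs2, hcos⟩ := hkey
    obtain ⟨F, hF1, hF2⟩ := construct N hN θ β s hs hs2 hcos
    rw [hEq] at hF1
    exact hF2 hF1
  · -- RHS → equality
    rintro ⟨n, hn1, hn2, hnl, hnr, hng⟩
    have hn1N : n + 1 ≤ N := by omega
    have hθNge : π/2 ≤ θ N := le_trans hnr (hmono' (n+1) N (by omega) hn1N le_rfl)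
    have hgapAll : ∀ k, 1 ≤ k → k < N → θ (k+1) - θ k ≤ π/2 := by
      intro k hk1 hkN
      rcases le_or_gt (θ (k+1)) (π/2) with h | h
      · have := hpos k hk1 (by omega); linarith
      rcases le_or_gt (π/2) (θ k) with h' | h'
      · have := hleN (k+1) (by omega) (by omega); linarith
      · have hkn : k = n := by
          by_contra hne
          rcases lt_or_gt_of_ne hne with hlt | hgt
          · have := hmono' (k+1) n (by omega) (by omega) (by omega)
            linarith
          · have := hmono' (n+1) k (by omega) (by omega) (by omega)
            linarith
        rw [hkn]; exact hng
    apply Set.Subset.antisymm _ (so2_subset N θ)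
    intro F hF
    rw [Set.mem_iInter₂] at hF
    have h1 := hF 1 (by rw [Finset.mem_Icc]; omega)
    rw [Set.mem_setOf_eq, mem_calN_rot_iff] at h1
    have hdet : F.det = 1 := h1.1
    have hdet' : F 0 0 * F 1 1 - F 0 1 * F 1 0 = 1 := by
      rw [← Matrix.det_fin_two]; exact hdet
    have habc := key_lemma N hN θ hθ1 hθNge hgapAll
      (F 0 0^2 + F 1 0^2) (F 0 0*F 0 1 + F 1 0*F 1 1) (F 0 1^2 + F 1 1^2)
      (by positivity)
      (by linear_combination (F 0 0*F 1 1 - F 0 1*F 1 0 + 1) * hdet')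
      (by
        intro k hk1 hk2
        have hk := hF k (by rw [Finset.mem_Icc]; exact ⟨hk1, hk2⟩)
        rw [Set.mem_setOf_eq, mem_calN_rot_iff] at hk
        calc (F 0 0^2 + F 1 0^2) * Real.cos (θ k)^2
              + 2*(F 0 0*F 0 1 + F 1 0*F 1 1)*Real.cos (θ k)*Real.sin (θ k)
              + (F 0 1^2 + F 1 1^2) * Real.sin (θ k)^2
            = (F 0 0 * Real.cos (θ k) + F 0 1 * Real.sin (θ k))^2
              + (F 1 0 * Real.cos (θ k) + F 1 1 * Real.sin (θ k))^2 := by ring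
          _ ≤ 1 := hk.2)
    obtain ⟨ha1, hb0, hc1⟩ := habc
    have hx2 : -1 ≤ F 0 0 ∧ F 0 0 ≤ 1 := by
      constructor <;> nlinarith [sq_nonneg (F 1 0), sq_nonneg (F 0 0 + 1), sq_nonneg (F 0 0 - 1)]
    set ψ : ℝ := if 0 ≤ F 1 0 then Real.arccos (F 0 0) else -Real.arccos (F 0 0) with hψ
    have hcψ : Real.cos ψ = F 0 0 := by
      rw [hψ]
      split_ifs
      · exact Real.cos_arccos hx2.1 hx2.2
      · rw [Real.cos_neg]; exact Real.cos_arccos hx2.1 hx2.2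
    have hsψ : Real.sin ψ = F 1 0 := by
      rw [hψ]
      split_ifs with h
      · rw [Real.sin_arccos, show 1 - F 0 0^2 = F 1 0^2 by linarith, Real.sqrt_sq h]
      · rw [Real.sin_neg, Real.sin_arccos, show 1 - F 0 0^2 = F 1 0^2 by linarith,
          Real.sqrt_sq_eq_abs, abs_of_neg (lt_of_not_ge h)]
        ring
    have h0 : (F 0 1 + F 1 0)^2 + (F 1 1 - F 0 0)^2 = 0 := by
      linear_combination ha1 + hc1 - 2*hdet'
    have he1 : (F 0 1 + F 1 0)^2 = 0 := by
      linarith [sq_nonneg (F 0 1 + F 1 0), sq_nonneg (F 1 1 - F 0 0)]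
    have he2 : (F 1 1 - F 0 0)^2 = 0 := by
      linarith [sq_nonneg (F 0 1 + F 1 0), sq_nonneg (F 1 1 - F 0 0)]
    have hy1 : F 0 1 = -F 1 0 := by
      have := pow_eq_zero_iff (n := 2) (by norm_num) |>.mp he1
      linarith
    have hy2 : F 1 1 = F 0 0 := by
      have := pow_eq_zero_iff (n := 2) (by norm_num) |>.mp he2
      linarith
    refine ⟨ψ, ?_⟩
    ext i j
    fin_cases i <;> fin_cases j <;> simp [rot]
    · exact hcψ.symm
    · rw [hy1, hsψ]
    · exact hsψ.symm
    · rw [hy2, hcψ]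
end
end

section
/- Let s, ν ∈ ℝ² be unit vectors with s·ν ≠ 0, and let F = R(β s⊗s + β⁻¹ s⊥⊗s⊥ + γ s⊗s⊥) where R ∈ SO(2), β > 0 and γ ∈ ℝ. Then the following are equivalent: (i) there exists a ∈ ℝ² with F + a⊗ν ∈ 𝓝_s; (ii) there exists a ∈ ℝ² with F + a⊗ν ∈ 𝓜_s; (iii) (((s·ν⊥)/(s·ν))·β + γ)² + β⁻² ≥ 1. -/
set_option maxHeartbeats 1000000


open Matrix Real Set MeasureTheory

noncomputable section

/-- Lemma on rank-one compatibility: equivalence of ν-compatibility with 𝓝_s,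
ν-compatibility with 𝓜_s, and the algebraic inequality. -/
theorem stmt2 (s ν : Fin 2 → ℝ) (hs : enorm2 s = 1) (hν : enorm2 ν = 1)
    (hsν : s ⬝ᵥ ν ≠ 0) (R : M2) (hR : R ∈ SO2) (β γ : ℝ) (hβ : 0 < β)
    (F : M2)
    (hF : F = R * (β • vecMulVec s s + β⁻¹ • vecMulVec (perp s) (perp s) +
      γ • vecMulVec s (perp s))) :
    ((∃ a : Fin 2 → ℝ, F + vecMulVec a ν ∈ calN s) ↔
      (∃ a : Fin 2 → ℝ, F + vecMulVec a ν ∈ calM s)) ∧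
    ((∃ a : Fin 2 → ℝ, F + vecMulVec a ν ∈ calN s) ↔
      ((s ⬝ᵥ perp ν) / (s ⬝ᵥ ν) * β + γ) ^ 2 + (β⁻¹) ^ 2 ≥ 1) := by
  obtain ⟨θ, rfl⟩ := hR
  have hβ0 : β ≠ 0 := ne_of_gt hβ
  have hbi0 : β⁻¹ ≠ 0 := inv_ne_zero hβ0
  have hbbi : β * β⁻¹ = 1 := mul_inv_cancel₀ hβ0
  have sqpos : ∀ x : ℝ, x ≠ 0 → 0 < x ^ 2 := by
    intro x hx
    rcases lt_or_gt_of_ne hx with h | h <;> nlinarith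
  have hs2 : s 0 ^ 2 + s 1 ^ 2 = 1 := by
    have h := hs; unfold enorm2 at h; exact Real.sqrt_eq_one.mp h
  have hν2 : ν 0 ^ 2 + ν 1 ^ 2 = 1 := by
    have h := hν; unfold enorm2 at h; exact Real.sqrt_eq_one.mp h
  have hcd : Real.cos θ ^ 2 + Real.sin θ ^ 2 = 1 := Real.cos_sq_add_sin_sq θ
  -- determinant identity
  have hdet : ∀ a : Fin 2 → ℝ, (F + vecMulVec a ν).det =
      1 + β * (a 1 * (Real.cos θ * s 0 - Real.sin θ * s 1) - a 0 * (Real.sin θ * s 0 + Real.cos θ * s 1)) * (s 0 * ν 1 - s 1 * ν 0)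
        + β⁻¹ * (a 0 * (Real.cos θ * s 0 - Real.sin θ * s 1) + a 1 * (Real.sin θ * s 0 + Real.cos θ * s 1)) * (s 0 * ν 0 + s 1 * ν 1)
        - γ * (a 1 * (Real.cos θ * s 0 - Real.sin θ * s 1) - a 0 * (Real.sin θ * s 0 + Real.cos θ * s 1)) * (s 0 * ν 0 + s 1 * ν 1) := by
    intro a
    rw [hF]
    simp only [Matrix.det_fin_two, Matrix.add_apply, Matrix.mul_apply, Matrix.smul_apply,
      Matrix.vecMulVec_apply, rot, perp, Fin.sum_univ_two, Matrix.cons_val', Matrix.cons_val_zero,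
      Matrix.cons_val_one, Matrix.head_cons, Matrix.empty_val', Matrix.cons_val_fin_one,
      Matrix.head_fin_const, smul_eq_mul, Matrix.of_apply]
    linear_combination (s 0 ^ 2 * Real.cos θ ^ 2 * β * β⁻¹ + s 0 ^ 2 * Real.sin θ ^ 2 * β * β⁻¹ + s 1 ^ 2 * Real.cos θ ^ 2 * β * β⁻¹ + s 1 ^ 2 * Real.sin θ ^ 2 * β * β⁻¹ + Real.cos θ ^ 2 * β * β⁻¹ + Real.sin θ ^ 2 * β * β⁻¹) * hs2 + (β * β⁻¹) * hcd + hbbi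
  -- norm identity
  have hnorm : ∀ a : Fin 2 → ℝ, ((F + vecMulVec a ν).mulVec s 0) ^ 2 + ((F + vecMulVec a ν).mulVec s 1) ^ 2 =
      (β + (a 0 * (Real.cos θ * s 0 - Real.sin θ * s 1) + a 1 * (Real.sin θ * s 0 + Real.cos θ * s 1)) * (s 0 * ν 0 + s 1 * ν 1)) ^ 2
      + ((a 1 * (Real.cos θ * s 0 - Real.sin θ * s 1) - a 0 * (Real.sin θ * s 0 + Real.cos θ * s 1)) * (s 0 * ν 0 + s 1 * ν 1)) ^ 2 := by
    intro a
    rw [hF]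
    simp only [Matrix.mulVec, dotProduct, Matrix.add_apply, Matrix.mul_apply, Matrix.smul_apply,
      Matrix.vecMulVec_apply, rot, perp, Fin.sum_univ_two, Matrix.cons_val', Matrix.cons_val_zero,
      Matrix.cons_val_one, Matrix.head_cons, Matrix.empty_val', Matrix.cons_val_fin_one,
      Matrix.head_fin_const, smul_eq_mul, Matrix.of_apply]
    linear_combination (s 0 ^ 4 * Real.cos θ ^ 2 * β ^ 2 + s 0 ^ 4 * Real.sin θ ^ 2 * β ^ 2 + (2) * s 0 ^ 2 * s 1 ^ 2 * Real.cos θ ^ 2 * β ^ 2 + (2) * s 0 ^ 2 * s 1 ^ 2 * Real.sin θ ^ 2 * β ^ 2 - (s 0 ^ 2 * ν 0 ^ 2 * Real.cos θ ^ 2 * a 0 ^ 2) - (s 0 ^ 2 * ν 0 ^ 2 * Real.cos θ ^ 2 * a 1 ^ 2) - (s 0 ^ 2 * ν 0 ^ 2 * Real.sin θ ^ 2 * a 0 ^ 2) - (s 0 ^ 2 * ν 0 ^ 2 * Real.sin θ ^ 2 * a 1 ^ 2) + (2) * s 0 ^ 2 * ν 0 * Real.cos θ * β * a 0 + (2) *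 s 0 ^ 2 * ν 0 * Real.sin θ * β * a 1 + s 0 ^ 2 * Real.cos θ ^ 2 * β ^ 2 + s 0 ^ 2 * Real.sin θ ^ 2 * β ^ 2 + (-2) * s 0 * s 1 * ν 0 * ν 1 * Real.cos θ ^ 2 * a 0 ^ 2 + (-2) * s 0 * s 1 * ν 0 * ν 1 * Real.cos θ ^ 2 * a 1 ^ 2 + (-2) * s 0 * s 1 * ν 0 * ν 1 * Real.sin θ ^ 2 * a 0 ^ 2 + (-2) * s 0 * s 1 * ν 0 * ν 1 * Real.sin θ ^ 2 * a 1 ^ 2 + (2) * s 0 * s 1 * ν 0 * Real.cos θ * β * a 1 + (-2) * s 0 * s 1 * ν 0 * Real.sin θ * β * a 0 + (2) * s 0 * s 1 * ν 1 * Real.cos θ * β * a 0 + (2) * s 0 * s 1 * ν 1 * Real.sin θ * β * a 1 + s 1 ^ 4 * Real.cos θ ^ 2 * β ^ 2 + s 1 ^ 4 * Real.sin θ ^ 2 * β ^ 2 - (s 1 ^ 2 * ν 1 ^ 2 * Real.cos θ ^ 2 * a 0 ^ 2) - (s 1 ^ 2 * ν 1 ^ 2 * Real.cos θ ^ 2 *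 a 1 ^ 2) - (s 1 ^ 2 * ν 1 ^ 2 * Real.sin θ ^ 2 * a 0 ^ 2) - (s 1 ^ 2 * ν 1 ^ 2 * Real.sin θ ^ 2 * a 1 ^ 2) + (2) * s 1 ^ 2 * ν 1 * Real.cos θ * β * a 1 + (-2) * s 1 ^ 2 * ν 1 * Real.sin θ * β * a 0 + s 1 ^ 2 * Real.cos θ ^ 2 * β ^ 2 + s 1 ^ 2 * Real.sin θ ^ 2 * β ^ 2 - (ν 0 ^ 2 * Real.cos θ ^ 2 * a 0 ^ 2) - (ν 0 ^ 2 * Real.cos θ ^ 2 * a 1 ^ 2) - (ν 0 ^ 2 * Real.sin θ ^ 2 * a 0 ^ 2) - (ν 0 ^ 2 * Real.sin θ ^ 2 * a 1 ^ 2) + ν 0 ^ 2 * a 0 ^ 2 + ν 0 ^ 2 * a 1 ^ 2 + Real.cos θ ^ 2 * β ^ 2 + Real.sin θ ^ 2 * β ^ 2) * hs2 + (s 1 ^ 2 * Real.cos θ ^ 2 * a 0 ^ 2 + s 1 ^ 2 * Real.cos θ ^ 2 * a 1 ^ 2 + s 1 ^ 2 * Real.sin θ ^ 2 * a 0 ^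 2 + s 1 ^ 2 * Real.sin θ ^ 2 * a 1 ^ 2 - (s 1 ^ 2 * a 0 ^ 2) - (s 1 ^ 2 * a 1 ^ 2) - (Real.cos θ ^ 2 * a 0 ^ 2) - (Real.cos θ ^ 2 * a 1 ^ 2) - (Real.sin θ ^ 2 * a 0 ^ 2) - (Real.sin θ ^ 2 * a 1 ^ 2) + a 0 ^ 2 + a 1 ^ 2) * hν2 + ((-2) * s 0 * s 1 * ν 0 * ν 1 * a 0 ^ 2 + (-2) * s 0 * s 1 * ν 0 * ν 1 * a 1 ^ 2 + (-2) * s 1 ^ 2 * ν 1 ^ 2 * a 0 ^ 2 + (-2) * s 1 ^ 2 * ν 1 ^ 2 * a 1 ^ 2 + s 1 ^ 2 * a 0 ^ 2 + s 1 ^ 2 * a 1 ^ 2 + ν 1 ^ 2 * a 0 ^ 2 + ν 1 ^ 2 * a 1 ^ 2 + β ^ 2 - (a 0 ^ 2) - (a 1 ^ 2)) * hcd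
  -- scalar abbreviations
  set u := s 0 * ν 0 + s 1 * ν 1 with hu_def
  set v := s 0 * ν 1 - s 1 * ν 0 with hv_def
  set K := β * (γ * u - β * v) with hK_def
  clear_value u v K
  have hdp2 : s ⬝ᵥ ν = u := by
    rw [hu_def]; simp only [dotProduct, Fin.sum_univ_two]
  have hdp1 : s ⬝ᵥ perp ν = -v := by
    rw [hv_def]
    simp only [dotProduct, Fin.sum_univ_two, perp, Matrix.cons_val_zero, Matrix.cons_val_one,
      Matrix.head_cons]
    ring
  have hu0 : u ≠ 0 := by rwa [hdp2] at hsν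
  have hu2 : 0 < u ^ 2 := sqpos u hu0
  -- membership characterizations
  have hmemN : ∀ M : M2, M ∈ calN s ↔
      (M.det = 1 ∧ (M.mulVec s 0) ^ 2 + (M.mulVec s 1) ^ 2 ≤ 1) := by
    intro M
    simp only [calN, Set.mem_setOf_eq, enorm2]
    rw [Real.sqrt_le_one]
  have hmemM : ∀ M : M2, M ∈ calM s ↔
      (M.det = 1 ∧ (M.mulVec s 0) ^ 2 + (M.mulVec s 1) ^ 2 = 1) := by
    intro M
    simp only [calM, Set.mem_setOf_eq, enorm2]
    rw [Real.sqrt_eq_one]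
  -- forward: existence in calN implies the key inequality
  have lemA : (∃ a : Fin 2 → ℝ, F + vecMulVec a ν ∈ calN s) → β ^ 2 * u ^ 2 ≤ K ^ 2 + u ^ 2 := by
    rintro ⟨a, haN⟩
    obtain ⟨hd, hn⟩ := (hmemN _).mp haN
    rw [hdet a] at hd
    rw [hnorm a] at hn
    set p := a 0 * (Real.cos θ * s 0 - Real.sin θ * s 1) + a 1 * (Real.sin θ * s 0 + Real.cos θ * s 1) with hp_def
    set q := a 1 * (Real.cos θ * s 0 - Real.sin θ * s 1) - a 0 * (Real.sin θ * s 0 + Real.cos θ * s 1) with hq_def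
    clear_value p q
    have hPu : p * u = q * K := by
      linear_combination β * hd - p * u * hbbi - q * hK_def
    have hsub : (β + q * K) ^ 2 + (q * u) ^ 2 = (β + p * u) ^ 2 + (q * u) ^ 2 := by
      linear_combination (-(2 * β + p * u + q * K)) * hPu
    have hn2 : (β + q * K) ^ 2 + (q * u) ^ 2 ≤ 1 := by rw [hsub]; exact hn
    nlinarith [sq_nonneg ((K ^ 2 + u ^ 2) * q + β * K),
      mul_nonneg (by positivity : (0:ℝ) ≤ K ^ 2 + u ^ 2)
        (by linarith : (0:ℝ) ≤ 1 - ((β + q * K) ^ 2 + (q * u) ^ 2))]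
  -- construction: key inequality implies existence in calM
  have lemB : β ^ 2 * u ^ 2 ≤ K ^ 2 + u ^ 2 → ∃ a : Fin 2 → ℝ, F + vecMulVec a ν ∈ calM s := by
    intro hge
    have hS : (0:ℝ) < K ^ 2 + u ^ 2 := by nlinarith [sq_nonneg K]
    have hD : (0:ℝ) ≤ K ^ 2 + u ^ 2 - β ^ 2 * u ^ 2 := by linarith
    have hr2 : Real.sqrt (K ^ 2 + u ^ 2 - β ^ 2 * u ^ 2) ^ 2 = K ^ 2 + u ^ 2 - β ^ 2 * u ^ 2 :=
      Real.sq_sqrt hD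
    set r := Real.sqrt (K ^ 2 + u ^ 2 - β ^ 2 * u ^ 2) with hr_def
    set S := K ^ 2 + u ^ 2 with hS_def
    have hS0 : S ≠ 0 := ne_of_gt hS
    set q0 := (-(β * K) + r) / S with hq0_def
    set p0 := q0 * K / u with hp0_def
    clear_value r S q0 p0
    have hq0S : S * q0 = -(β * K) + r := by
      rw [hq0_def]; field_simp
    have hq0quad : S * q0 ^ 2 + 2 * β * K * q0 + β ^ 2 = 1 := by
      apply mul_left_cancel₀ hS0
      linear_combination (S * q0 + β * K + r) * hq0S + hr2 + β ^ 2 * hS_def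
    have hp0u : p0 * u = q0 * K := by
      rw [hp0_def]; field_simp
    refine ⟨![p0 * (Real.cos θ * s 0 - Real.sin θ * s 1) - q0 * (Real.sin θ * s 0 + Real.cos θ * s 1),
      p0 * (Real.sin θ * s 0 + Real.cos θ * s 1) + q0 * (Real.cos θ * s 0 - Real.sin θ * s 1)], ?_⟩
    rw [hmemM]
    constructor
    · rw [hdet]
      simp only [Matrix.cons_val_zero, Matrix.cons_val_one, Matrix.head_cons]
      linear_combination (β⁻¹ * ((Real.cos θ * s 0 - Real.sin θ * s 1) ^ 2 + (Real.sin θ * s 0 + Real.cos θ * s 1) ^ 2)) * hp0u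
        + (β⁻¹ * q0 * ((Real.cos θ * s 0 - Real.sin θ * s 1) ^ 2 + (Real.sin θ * s 0 + Real.cos θ * s 1) ^ 2)) * hK_def
        + (q0 * (γ * u - β * v) * ((Real.cos θ * s 0 - Real.sin θ * s 1) ^ 2 + (Real.sin θ * s 0 + Real.cos θ * s 1) ^ 2)) * hbbi
    · rw [hnorm]
      simp only [Matrix.cons_val_zero, Matrix.cons_val_one, Matrix.head_cons]
      linear_combination ((s 0 ^ 2 + s 1 ^ 2) * (p0 * u * (2 * β + p0 * u * (((Real.cos θ * s 0 - Real.sin θ * s 1) ^ 2 + (Real.sin θ * s 0 + Real.cos θ * s 1) ^ 2) + 1)) + q0 ^ 2 * u ^ 2 * (((Real.cos θ * s 0 - Real.sin θ * s 1) ^ 2 + (Real.sin θ * s 0 + Real.cos θ * s 1) ^ 2) + 1))) * hcd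
        + (p0 * u * (2 * β + p0 * u * (((Real.cos θ * s 0 - Real.sin θ * s 1) ^ 2 + (Real.sin θ * s 0 + Real.cos θ * s 1) ^ 2) + 1)) + q0 ^ 2 * u ^ 2 * (((Real.cos θ * s 0 - Real.sin θ * s 1) ^ 2 + (Real.sin θ * s 0 + Real.cos θ * s 1) ^ 2) + 1)) * hs2
        + (2 * β + p0 * u + q0 * K) * hp0u
        + (-(q0 ^ 2)) * hS_def
        + hq0quad
  -- calM implies calN
  have hMN : ∀ a : Fin 2 → ℝ, F + vecMulVec a ν ∈ calM s → F + vecMulVec a ν ∈ calN s := by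
    intro a ha
    obtain ⟨h1, h2⟩ := (hmemM _).mp ha
    exact (hmemN _).mpr ⟨h1, le_of_eq h2⟩
  -- the key inequality is equivalent to condition (iii)
  have hiii : (β ^ 2 * u ^ 2 ≤ K ^ 2 + u ^ 2) ↔
      ((s ⬝ᵥ perp ν) / (s ⬝ᵥ ν) * β + γ) ^ 2 + (β⁻¹) ^ 2 ≥ 1 := by
    rw [hdp1, hdp2]
    have heq2 : ((-v / u * β + γ) ^ 2 + (β⁻¹) ^ 2 - 1) * (β ^ 2 * u ^ 2) =
        K ^ 2 + u ^ 2 - β ^ 2 * u ^ 2 := by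
      rw [hK_def]
      field_simp
      ring
    have hP : 0 < β ^ 2 * u ^ 2 := mul_pos (sqpos β hβ0) hu2
    constructor
    · intro h
      nlinarith [heq2, hP]
    · intro h
      nlinarith [heq2, hP]
  constructor
  · constructor
    · intro h
      exact lemB (lemA h)
    · rintro ⟨a, ha⟩
      exact ⟨a, hMN a ha⟩
  · constructor
    · intro h
      exact hiii.mp (lemA h)
    · intro h
      obtain ⟨a, ha⟩ := lemB (hiii.mpr h)
      exact ⟨a, hMN a ha⟩
end
end

section
/- Let s ∈ ℝ² be a unit vector and F ∈ ℝ^{2×2}. Then: (a) det F = 1 if and only if there exist R ∈ SO(2), β > 0 and γ ∈ ℝ with F = R(β s⊗s + β⁻¹ s⊥⊗s⊥ + γ s⊗s⊥); (b) F ∈ 𝓝_s if and only if such a representation exists with 0 < β ≤ 1; (c) F ∈ 𝓜_s if and only if such a representation exists with β = 1. -/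
open Matrix Real Set MeasureTheory

noncomputable section

def Gm (s : Fin 2 → ℝ) (β γ : ℝ) : Matrix (Fin 2) (Fin 2) ℝ :=
  β • vecMulVec s s + β⁻¹ • vecMulVec (perp s) (perp s) + γ • vecMulVec s (perp s)

lemma exists_cos_sin (x y : ℝ) (h : x^2 + y^2 = 1) : ∃ θ, Real.cos θ = x ∧ Real.sin θ = y := by
  have hx1 : -1 ≤ x := by nlinarith
  have hx2 : x ≤ 1 := by nlinarith
  rcases le_or_gt 0 y with hy | hy
  · refine ⟨Real.arccos x, Real.cos_arccos hx1 hx2, ?_⟩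
    rw [Real.sin_arccos, show (1:ℝ) - x^2 = y^2 by linarith, Real.sqrt_sq hy]
  · refine ⟨-Real.arccos x, by rw [Real.cos_neg]; exact Real.cos_arccos hx1 hx2, ?_⟩
    rw [Real.sin_neg, Real.sin_arccos, show (1:ℝ) - x^2 = y^2 by linarith,
      Real.sqrt_sq_eq_abs, abs_of_neg hy, neg_neg]

lemma rot_det (θ : ℝ) : (rot θ).det = 1 := by
  simp [rot, Matrix.det_fin_two_of]
  nlinarith [Real.sin_sq_add_cos_sq θ]

lemma Gm_det (s : Fin 2 → ℝ) (hn : s 0 ^ 2 + s 1 ^ 2 = 1) (β γ : ℝ) (hβ : β ≠ 0) :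
    (Gm s β γ).det = 1 := by
  have hβi : β * β⁻¹ = 1 := mul_inv_cancel₀ hβ
  simp only [Gm, Matrix.det_fin_two, Matrix.add_apply, Matrix.smul_apply, Matrix.vecMulVec_apply,
    perp, smul_eq_mul]
  simp only [Matrix.cons_val_zero, Matrix.cons_val_one, Matrix.head_cons]
  linear_combination (β*β⁻¹*(s 0^2+s 1^2+1)) * hn + hβi

lemma Gm_mulVec_s (s : Fin 2 → ℝ) (hn : s 0 ^ 2 + s 1 ^ 2 = 1) (β γ : ℝ) :
    (Gm s β γ).mulVec s = β • s := by
  funext i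
  fin_cases i <;>
    simp only [Gm, Matrix.mulVec, dotProduct, Fin.sum_univ_two, Matrix.add_apply,
      Matrix.smul_apply, Matrix.vecMulVec_apply, perp, smul_eq_mul, Pi.smul_apply,
      Fin.mk_zero, Fin.mk_one, Matrix.cons_val_zero, Matrix.cons_val_one, Matrix.head_cons, Fin.isValue] <;>
    [linear_combination (β * s 0) * hn; linear_combination (β * s 1) * hn]

lemma enorm2_rot_mulVec (θ : ℝ) (v : Fin 2 → ℝ) : enorm2 ((rot θ).mulVec v) = enorm2 v := by
  unfold enorm2
  congr 1
  simp only [rot, Matrix.mulVec, dotProduct, Fin.sum_univ_two, Fin.isValue,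
    Matrix.cons_val', Matrix.cons_val_zero, Matrix.cons_val_one, Matrix.head_cons,
    Matrix.empty_val', Matrix.cons_val_fin_one, Matrix.head_fin_const, Matrix.of_apply]
  nlinarith [Real.sin_sq_add_cos_sq θ]

lemma enorm2_smul (β : ℝ) (hβ : 0 ≤ β) (v : Fin 2 → ℝ) : enorm2 (β • v) = β * enorm2 v := by
  unfold enorm2
  rw [show (β • v) 0 = β * v 0 from rfl, show (β • v) 1 = β * v 1 from rfl,
    show (β * v 0)^2 + (β * v 1)^2 = β^2 * ((v 0)^2 + (v 1)^2) by ring,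
    Real.sqrt_mul (by positivity), Real.sqrt_sq hβ]

lemma rev (s : Fin 2 → ℝ) (hn : s 0 ^ 2 + s 1 ^ 2 = 1) (θ β γ : ℝ) (hβ : 0 < β) :
    (rot θ * Gm s β γ).det = 1 ∧ enorm2 ((rot θ * Gm s β γ).mulVec s) = β := by
  constructor
  · rw [Matrix.det_mul, rot_det, Gm_det s hn β γ hβ.ne', one_mul]
  · rw [← Matrix.mulVec_mulVec, Gm_mulVec_s s hn β γ, enorm2_rot_mulVec,
      enorm2_smul β hβ.le]
    have : enorm2 s = 1 := by
      unfold enorm2; rw [hn, Real.sqrt_one]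
    rw [this, mul_one]

lemma eq_of_mulVec (s : Fin 2 → ℝ) (hn : s 0 ^ 2 + s 1 ^ 2 = 1)
    (A B : Matrix (Fin 2) (Fin 2) ℝ) (h1 : A.mulVec s = B.mulVec s)
    (h2 : A.mulVec (perp s) = B.mulVec (perp s)) : A = B := by
  ext i j
  have e1 := congrFun h1 i
  have e2 := congrFun h2 i
  simp only [Matrix.mulVec, dotProduct, Fin.sum_univ_two, perp, Fin.isValue,
    Matrix.cons_val_zero, Matrix.cons_val_one, Matrix.head_cons] at e1 e2
  fin_cases j
  · show A i 0 = B i 0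
    linear_combination s 0 * e1 - s 1 * e2 - (A i 0 - B i 0) * hn
  · show A i 1 = B i 1
    linear_combination s 1 * e1 + s 0 * e2 - (A i 1 - B i 1) * hn

lemma fwd (s : Fin 2 → ℝ) (hn : s 0 ^ 2 + s 1 ^ 2 = 1) (F : Matrix (Fin 2) (Fin 2) ℝ)
    (hF : F.det = 1) :
    ∃ θ γ : ℝ, 0 < enorm2 (F.mulVec s) ∧ F = rot θ * Gm s (enorm2 (F.mulVec s)) γ := by
  have hdet : F 0 0 * F 1 1 - F 0 1 * F 1 0 = 1 := by
    rw [← Matrix.det_fin_two]; exact hF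
  set a := F 0 0 with ha; set b := F 0 1 with hb; set c := F 1 0 with hc; set d := F 1 1 with hd
  set p0 := a * s 0 + b * s 1 with hp0
  set p1 := c * s 0 + d * s 1 with hp1
  have hFs0 : F.mulVec s 0 = p0 := by
    simp [Matrix.mulVec, dotProduct, Fin.sum_univ_two, hp0, ha, hb]
  have hFs1 : F.mulVec s 1 = p1 := by
    simp [Matrix.mulVec, dotProduct, Fin.sum_univ_two, hp1, hc, hd]
  have hpos : 0 < p0 ^ 2 + p1 ^ 2 := by
    rcases lt_or_eq_of_le (by positivity : (0:ℝ) ≤ p0 ^ 2 + p1 ^ 2) with h | h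
    · exact h
    · exfalso
      have hq0 : p0 = 0 := by nlinarith
      have hq1 : p1 = 0 := by nlinarith
      have : (1:ℝ) = 0 := by
        linear_combination (d * s 0 - c * s 1) * hq0 + (a * s 1 - b * s 0) * hq1
          - (s 0 ^ 2 + s 1 ^ 2) * hdet - hn
      norm_num at this
  set β := Real.sqrt (p0 ^ 2 + p1 ^ 2) with hβdef
  have hβval : enorm2 (F.mulVec s) = β := by
    unfold enorm2; rw [hFs0, hFs1]
  have hβpos : 0 < β := Real.sqrt_pos.mpr hpos
  have hβne : β ≠ 0 := hβpos.ne'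
  have hβsq : β ^ 2 = p0 ^ 2 + p1 ^ 2 := Real.sq_sqrt hpos.le
  obtain ⟨u0, hu0⟩ : ∃ x : ℝ, x * β = p0 := ⟨p0 / β, by field_simp⟩
  obtain ⟨u1, hu1⟩ : ∃ x : ℝ, x * β = p1 := ⟨p1 / β, by field_simp⟩
  have hu : u0 ^ 2 + u1 ^ 2 = 1 := by
    have h2 : (u0 ^ 2 + u1 ^ 2) * β ^ 2 = 1 * β ^ 2 := by
      linear_combination (u0 * β + p0) * hu0 + (u1 * β + p1) * hu1 - hβsq
    exact mul_right_cancel₀ (pow_ne_zero 2 hβne) h2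
  set v0 := -a * s 1 + b * s 0 with hv0
  set v1 := -c * s 1 + d * s 0 with hv1
  obtain ⟨γ, hγ⟩ : ∃ x : ℝ, x = v0 * u0 + v1 * u1 := ⟨_, rfl⟩
  have hcs : (u0 * s 0 + u1 * s 1) ^ 2 + (u1 * s 0 - u0 * s 1) ^ 2 = 1 := by
    linear_combination (s 0 ^ 2 + s 1 ^ 2) * hu + hn
  obtain ⟨θ, hcos, hsin⟩ := exists_cos_sin _ _ hcs
  have hvu : v0 * u1 - v1 * u0 = -β⁻¹ := by
    have h : (v0 * u1 - v1 * u0) * β = -1 := by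
      linear_combination v0 * hu1 - v1 * hu0 - (a * d - b * c) * hn - hdet
    field_simp
    linear_combination h
  have hB0 : v0 = γ * u0 - β⁻¹ * u1 := by
    linear_combination u1 * hvu - v0 * hu - u0 * hγ
  have hB1 : v1 = γ * u1 + β⁻¹ * u0 := by
    linear_combination -u0 * hvu - v1 * hu - u1 * hγ
  refine ⟨θ, γ, by rw [hβval]; exact hβpos, ?_⟩
  rw [hβval]
  apply eq_of_mulVec s hn
  · funext i
    rw [← Matrix.mulVec_mulVec, Gm_mulVec_s s hn _ γ]
    fin_cases i <;>
      simp only [rot, Matrix.mulVec, dotProduct, Fin.sum_univ_two, Fin.isValue,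
        Fin.mk_zero, Fin.mk_one, Matrix.cons_val', Matrix.cons_val_zero, Matrix.cons_val_one,
        Matrix.head_cons, Matrix.empty_val', Matrix.cons_val_fin_one, Matrix.head_fin_const,
        Matrix.of_apply, Pi.smul_apply, smul_eq_mul, hcos, hsin] <;>
      [linear_combination -hu0 - β * u0 * hn;
       linear_combination -hu1 - β * u1 * hn]
  · funext i
    rw [← Matrix.mulVec_mulVec]
    fin_cases i <;>
      simp only [rot, Gm, Matrix.mulVec, dotProduct, Fin.sum_univ_two, Fin.isValue,
        Fin.mk_zero, Fin.mk_one, Matrix.cons_val', Matrix.cons_val_zero, Matrix.cons_val_one,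
        Matrix.head_cons, Matrix.empty_val', Matrix.cons_val_fin_one, Matrix.head_fin_const,
        Matrix.of_apply, Matrix.add_apply, Matrix.smul_apply, Matrix.vecMulVec_apply, perp,
        smul_eq_mul, hcos, hsin] <;>
      [linear_combination hB0 - (γ * u0 - β⁻¹ * u1) * (s 0 ^ 2 + s 1 ^ 2 + 1) * hn;
       linear_combination hB1 - (γ * u1 + β⁻¹ * u0) * (s 0 ^ 2 + s 1 ^ 2 + 1) * hn]

/-- Representation of matrices: (a) det F = 1 iff F = R(β s⊗s + β⁻¹ s⊥⊗s⊥ + γ s⊗s⊥)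
with R ∈ SO(2), β > 0; (b) F ∈ 𝓝_s iff moreover 0 < β ≤ 1; (c) F ∈ 𝓜_s iff β = 1. -/
theorem stmt3 (s : Fin 2 → ℝ) (hs : enorm2 s = 1) (F : M2) :
    (F.det = 1 ↔ ∃ R ∈ SO2, ∃ β γ : ℝ, 0 < β ∧
      F = R * (β • vecMulVec s s + β⁻¹ • vecMulVec (perp s) (perp s) +
        γ • vecMulVec s (perp s))) ∧
    (F ∈ calN s ↔ ∃ R ∈ SO2, ∃ β γ : ℝ, 0 < β ∧ β ≤ 1 ∧
      F = R * (β • vecMulVec s s + β⁻¹ • vecMulVec (perp s) (perp s) +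
        γ • vecMulVec s (perp s))) ∧
    (F ∈ calM s ↔ ∃ R ∈ SO2, ∃ γ : ℝ,
      F = R * ((1 : ℝ) • vecMulVec s s + (1 : ℝ)⁻¹ • vecMulVec (perp s) (perp s) +
        γ • vecMulVec s (perp s))) := by
  have hn : s 0 ^ 2 + s 1 ^ 2 = 1 := by
    have h0 : (0:ℝ) ≤ s 0 ^ 2 + s 1 ^ 2 := by positivity
    have h1 := hs
    unfold enorm2 at h1
    nlinarith [Real.sq_sqrt h0]
  refine ⟨?_, ?_, ?_⟩
  · constructor
    · intro hF
      obtain ⟨θ, γ, hb, hrep⟩ := fwd s hn F hF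
      exact ⟨rot θ, ⟨θ, rfl⟩, enorm2 (F.mulVec s), γ, hb, hrep⟩
    · rintro ⟨R, ⟨θ, rfl⟩, β, γ, hβ, rfl⟩
      exact (rev s hn θ β γ hβ).1
  · constructor
    · rintro ⟨hF, hle⟩
      obtain ⟨θ, γ, hb, hrep⟩ := fwd s hn F hF
      exact ⟨rot θ, ⟨θ, rfl⟩, enorm2 (F.mulVec s), γ, hb, hle, hrep⟩
    · rintro ⟨R, ⟨θ, rfl⟩, β, γ, hβ, hβ1, rfl⟩
      have h := rev s hn θ β γ hβ
      refine ⟨h.1, ?_⟩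
      have e : (rot θ * (β • vecMulVec s s + β⁻¹ • vecMulVec (perp s) (perp s) +
          γ • vecMulVec s (perp s))) = rot θ * Gm s β γ := rfl
      rw [e, h.2]
      exact hβ1
  · constructor
    · rintro ⟨hF, heq⟩
      obtain ⟨θ, γ, hb, hrep⟩ := fwd s hn F hF
      rw [heq] at hrep
      exact ⟨rot θ, ⟨θ, rfl⟩, γ, hrep⟩
    · rintro ⟨R, ⟨θ, rfl⟩, γ, rfl⟩
      have h := rev s hn θ 1 γ one_pos
      refine ⟨h.1, ?_⟩
      have e : (rot θ * ((1:ℝ) • vecMulVec s s + (1:ℝ)⁻¹ • vecMulVec (perp s) (perp s) +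
          γ • vecMulVec s (perp s))) = rot θ * Gm s 1 γ := rfl
      rw [e, h.2]
end
end

section
/- Let s ∈ ℝ² be a unit vector, let F ∈ ℝ^{2×2} with det F = 1, and let 𝓓 be a dense subset of the unit circle {ν ∈ ℝ² : ‖ν‖ = 1}. Then there exists a ∈ ℝ² with F + a⊗s⊥ ∈ 𝓝_s if and only if for every ν ∈ 𝓓 there exists a ∈ ℝ² with F + a⊗ν ∈ 𝓝_s. -/
open Matrix Real Set MeasureTheory

noncomputable section

namespace Stmt5Aux

/-- 2D cross product. -/
def cross2 (u v : Fin 2 → ℝ) : ℝ := u 0 * v 1 - u 1 * v 0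

lemma enorm2_nonneg (v : Fin 2 → ℝ) : 0 ≤ enorm2 v := Real.sqrt_nonneg _

lemma sq_enorm2 (v : Fin 2 → ℝ) : enorm2 v ^ 2 = v 0 ^ 2 + v 1 ^ 2 := by
  rw [enorm2, Real.sq_sqrt (by positivity)]

lemma abs_cross2_le (u v : Fin 2 → ℝ) : |cross2 u v| ≤ enorm2 u * enorm2 v := by
  have h1 : cross2 u v ^ 2 ≤ (u 0 ^ 2 + u 1 ^ 2) * (v 0 ^ 2 + v 1 ^ 2) := by
    have := sq_nonneg (u 0 * v 0 + u 1 * v 1)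
    rw [cross2]; nlinarith
  have h2 : |cross2 u v| = Real.sqrt (cross2 u v ^ 2) := (Real.sqrt_sq_eq_abs _).symm
  rw [h2, enorm2, enorm2, ← Real.sqrt_mul (by positivity)]
  exact Real.sqrt_le_sqrt h1

lemma enorm2_eq_one_iff (v : Fin 2 → ℝ) : enorm2 v = 1 ↔ v 0 ^ 2 + v 1 ^ 2 = 1 := by
  constructor
  · intro h
    have := sq_enorm2 v
    rw [h] at this; linarith
  · intro h; rw [enorm2, h, Real.sqrt_one]

end Stmt5Aux

open Stmt5Aux in
/-- F is s⊥-compatible with 𝓝_s iff F is ν-compatible with 𝓝_s for every ν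
in a dense subset 𝓓 of the unit circle. -/
theorem stmt5 (s : Fin 2 → ℝ) (hs : enorm2 s = 1) (F : M2) (hF : F.det = 1)
    (D : Set (Fin 2 → ℝ)) (hD : D ⊆ {ν : Fin 2 → ℝ | enorm2 ν = 1})
    (hdense : {ν : Fin 2 → ℝ | enorm2 ν = 1} ⊆ closure D) :
    (∃ a : Fin 2 → ℝ, F + vecMulVec a (perp s) ∈ calN s) ↔
      ∀ ν ∈ D, ∃ a : Fin 2 → ℝ, F + vecMulVec a ν ∈ calN s := by
  have hvz : ∀ ν : Fin 2 → ℝ, vecMulVec (0 : Fin 2 → ℝ) ν = 0 := by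
    intro ν; ext i j; simp [Matrix.vecMulVec_apply]
  constructor
  · rintro ⟨a, hdet, hnorm⟩ ν hν
    have hx : (F + vecMulVec a (perp s)).mulVec s = F.mulVec s := by
      funext i
      simp [Matrix.add_mulVec, Matrix.mulVec, dotProduct, Fin.sum_univ_two,
        Matrix.vecMulVec_apply, perp]
      ring
    rw [hx] at hnorm
    exact ⟨0, by rw [hvz ν, add_zero]; exact ⟨hF, hnorm⟩⟩
  · intro h
    -- key pointwise inequality on D
    have key : ∀ ν ∈ D, |s ⬝ᵥ ν| ≤ enorm2 (F.mulVec (perp ν)) := by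
      intro ν hν
      obtain ⟨a, hdet, hnorm⟩ := h ν hν
      set x := (F + vecMulVec a ν).mulVec s with hxdef
      set y := F.mulVec (perp ν) with hydef
      have hcross : cross2 x y = s ⬝ᵥ ν := by
        have hdet' : (F + vecMulVec a ν).det = 1 := hdet
        rw [Matrix.det_fin_two] at hdet' hF
        simp only [hxdef, hydef, cross2, Matrix.mulVec, dotProduct,
          Fin.sum_univ_two, Matrix.add_apply, Matrix.vecMulVec_apply, perp,
          Matrix.cons_val_zero, Matrix.cons_val_one, Matrix.head_cons] at hdet' ⊢
        linear_combination (s 0 * ν 0 + s 1 * ν 1) * hF +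
          (ν 0 * s 0 + ν 1 * s 1) * hdet' - (ν 0 * s 0 + ν 1 * s 1) * hF
      have h1 : |cross2 x y| ≤ enorm2 x * enorm2 y := abs_cross2_le x y
      have h2 : enorm2 x * enorm2 y ≤ 1 * enorm2 y :=
        mul_le_mul_of_nonneg_right hnorm (enorm2_nonneg y)
      rw [hcross] at h1
      linarith
    -- the inequality extends to the whole circle by density
    have hclosed : IsClosed {ν : Fin 2 → ℝ | |s ⬝ᵥ ν| ≤ enorm2 (F.mulVec (perp ν))} := by
      apply isClosed_le
      · have : Continuous fun ν : Fin 2 → ℝ => s ⬝ᵥ ν := by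
          simp only [dotProduct, Fin.sum_univ_two]
          fun_prop
        exact this.abs
      · have hc : ∀ i : Fin 2, Continuous fun ν : Fin 2 → ℝ => F.mulVec (perp ν) i := by
          intro i
          simp only [Matrix.mulVec, dotProduct, Fin.sum_univ_two, perp,
            Matrix.cons_val_zero, Matrix.cons_val_one, Matrix.head_cons]
          fun_prop
        have : Continuous fun ν : Fin 2 → ℝ =>
            (F.mulVec (perp ν) 0) ^ 2 + (F.mulVec (perp ν) 1) ^ 2 := by
          exact ((hc 0).pow 2).add ((hc 1).pow 2)
        exact Real.continuous_sqrt.comp this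
    have hall : ∀ ν : Fin 2 → ℝ, enorm2 ν = 1 → |s ⬝ᵥ ν| ≤ enorm2 (F.mulVec (perp ν)) := by
      intro ν hν
      have : closure D ⊆ {ν : Fin 2 → ℝ | |s ⬝ᵥ ν| ≤ enorm2 (F.mulVec (perp ν))} :=
        closure_minimal key hclosed
      exact this (hdense hν)
    -- now the special ν*
    have hs' : s 0 ^ 2 + s 1 ^ 2 = 1 := (enorm2_eq_one_iff s).1 hs
    obtain ⟨p, hpdef⟩ : ∃ p : Fin 2 → ℝ, p = F.mulVec s := ⟨_, rfl⟩
    have hp0 : p 0 = F 0 0 * s 0 + F 0 1 * s 1 := by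
      rw [hpdef]; simp [Matrix.mulVec, dotProduct, Fin.sum_univ_two]
    have hp1 : p 1 = F 1 0 * s 0 + F 1 1 * s 1 := by
      rw [hpdef]; simp [Matrix.mulVec, dotProduct, Fin.sum_univ_two]
    have hFe := hF
    rw [Matrix.det_fin_two] at hFe
    -- p ≠ 0
    have hpsq : 0 < p 0 ^ 2 + p 1 ^ 2 := by
      rcases lt_or_eq_of_le (by positivity : (0:ℝ) ≤ p 0 ^ 2 + p 1 ^ 2) with h' | h'
      · exact h'
      · exfalso
        have h0 : p 0 = 0 := by nlinarith [sq_nonneg (p 0), sq_nonneg (p 1)]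
        have h1 : p 1 = 0 := by nlinarith [sq_nonneg (p 0), sq_nonneg (p 1)]
        rw [hp0] at h0; rw [hp1] at h1
        have e0 : s 0 = 0 := by
          linear_combination F 1 1 * h0 - F 0 1 * h1 - s 0 * hFe
        have e1 : s 1 = 0 := by
          linear_combination F 0 0 * h1 - F 1 0 * h0 - s 1 * hFe
        rw [e0, e1] at hs'
        norm_num at hs'
    obtain ⟨w, hw0, hw1⟩ : ∃ w : Fin 2 → ℝ,
        w 0 = -(F 1 1 * p 1) - F 0 1 * p 0 ∧ w 1 = F 1 0 * p 1 + F 0 0 * p 0 :=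
      ⟨![-(F 1 1 * p 1) - F 0 1 * p 0, F 1 0 * p 1 + F 0 0 * p 0], by simp, by simp⟩
    have hFw0 : F 0 0 * w 0 + F 0 1 * w 1 = -(p 1) := by
      rw [hw0, hw1]; linear_combination (-(p 1)) * hFe
    have hFw1 : F 1 0 * w 0 + F 1 1 * w 1 = p 0 := by
      rw [hw0, hw1]; linear_combination (p 0) * hFe
    have hwsq : 0 < w 0 ^ 2 + w 1 ^ 2 := by
      rcases lt_or_eq_of_le (by positivity : (0:ℝ) ≤ w 0 ^ 2 + w 1 ^ 2) with h' | h'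
      · exact h'
      · exfalso
        have h0 : w 0 = 0 := by nlinarith [sq_nonneg (w 0), sq_nonneg (w 1)]
        have h1 : w 1 = 0 := by nlinarith [sq_nonneg (w 0), sq_nonneg (w 1)]
        rw [h0, h1] at hFw0 hFw1
        nlinarith
    obtain ⟨r, hrdef⟩ : ∃ r : ℝ, r = Real.sqrt (w 0 ^ 2 + w 1 ^ 2) := ⟨_, rfl⟩
    have hr : 0 < r := by rw [hrdef]; exact Real.sqrt_pos.2 hwsq
    have hrne : r ≠ 0 := ne_of_gt hr
    have hr2 : r ^ 2 = w 0 ^ 2 + w 1 ^ 2 := by rw [hrdef]; exact Real.sq_sqrt hwsq.le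
    obtain ⟨ν, hν0, hν1⟩ : ∃ ν : Fin 2 → ℝ, ν 0 = w 1 / r ∧ ν 1 = -(w 0) / r :=
      ⟨![w 1 / r, -(w 0) / r], by simp, by simp⟩
    have hνunit : enorm2 ν = 1 := by
      rw [enorm2_eq_one_iff, hν0, hν1]
      field_simp
      linarith [hr2]
    have hineq := hall ν hνunit
    -- compute F.mulVec (perp ν)
    have hq0 : F.mulVec (perp ν) 0 = -(p 1) / r := by
      simp only [Matrix.mulVec, dotProduct, Fin.sum_univ_two, perp,
        Matrix.cons_val_zero, Matrix.cons_val_one, Matrix.head_cons, hν0, hν1]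
      field_simp
      linear_combination hFw0
    have hq1 : F.mulVec (perp ν) 1 = p 0 / r := by
      simp only [Matrix.mulVec, dotProduct, Fin.sum_univ_two, perp,
        Matrix.cons_val_zero, Matrix.cons_val_one, Matrix.head_cons, hν0, hν1]
      field_simp
      linear_combination hFw1
    obtain ⟨n, hndef⟩ : ∃ n : ℝ, n = Real.sqrt (p 0 ^ 2 + p 1 ^ 2) := ⟨_, rfl⟩
    have hn : 0 < n := by rw [hndef]; exact Real.sqrt_pos.2 hpsq
    have hn2 : n ^ 2 = p 0 ^ 2 + p 1 ^ 2 := by rw [hndef]; exact Real.sq_sqrt hpsq.le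
    have henq : enorm2 (F.mulVec (perp ν)) = n / r := by
      rw [enorm2, hq0, hq1]
      rw [show (-(p 1)/r)^2 + (p 0 / r)^2 = (p 0 ^ 2 + p 1 ^ 2)/r^2 by field_simp; ring]
      rw [Real.sqrt_div (by positivity), Real.sqrt_sq hr.le, ← hndef]
    have hsν : s ⬝ᵥ ν = (p 0 ^ 2 + p 1 ^ 2) / r := by
      have step : s ⬝ᵥ ν = (s 0 * w 1 - s 1 * w 0) / r := by
        simp only [dotProduct, Fin.sum_univ_two, hν0, hν1]
        ring
      rw [step]
      congr 1
      rw [hw0, hw1, hp0, hp1]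
      ring
    rw [henq, hsν] at hineq
    rw [abs_of_nonneg (show (0:ℝ) ≤ (p 0 ^ 2 + p 1 ^ 2) / r by positivity)] at hineq
    have hfin : n ≤ 1 := by
      rw [← hn2] at hineq
      have h2 : n ^ 2 ≤ n := by
        rw [div_le_div_iff₀ hr hr] at hineq
        exact le_of_mul_le_mul_right hineq hr
      rw [pow_two] at h2
      exact (mul_le_iff_le_one_left hn).mp h2
    refine ⟨0, ?_⟩
    rw [hvz (perp s), add_zero]
    refine ⟨hF, ?_⟩
    show enorm2 (F.mulVec s) ≤ 1
    rw [enorm2, ← hpdef, ← hndef]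
    exact hfin
end
end

section
/- Let s, s′ ∈ ℝ² be unit vectors with s′ ≠ s and s′ ≠ −s. Then for every F ∈ ℝ^{2×2} with det F = 1 there exist matrices F₊, F₋ ∈ 𝓝_s ∪ 𝓝_{s′} and λ ∈ [0,1] such that F = λ F₊ + (1−λ) F₋ and F₊ − F₋ has rank at most one. -/
open Matrix Real Set MeasureTheory

noncomputable section

lemma mulVec2 (F : M2) (w : Fin 2 → ℝ) (i : Fin 2) :
    F.mulVec w i = F i 0 * w 0 + F i 1 * w 1 := by
  simp [Matrix.mulVec, dotProduct, Fin.sum_univ_two]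

lemma enorm2_le_one_iff (v : Fin 2 → ℝ) : enorm2 v ≤ 1 ↔ (v 0)^2 + (v 1)^2 ≤ 1 := by
  unfold enorm2
  constructor
  · intro h
    nlinarith [Real.sq_sqrt (by positivity : (0:ℝ) ≤ (v 0)^2 + (v 1)^2),
      Real.sqrt_nonneg ((v 0)^2 + (v 1)^2)]
  · intro h
    calc Real.sqrt ((v 0)^2 + (v 1)^2) ≤ Real.sqrt 1 := Real.sqrt_le_sqrt h
    _ = 1 := Real.sqrt_one

lemma enorm2_eq_one (v : Fin 2 → ℝ) (h : enorm2 v = 1) : (v 0)^2 + (v 1)^2 = 1 := by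
  have h2 := Real.sq_sqrt (by positivity : (0:ℝ) ≤ (v 0)^2 + (v 1)^2)
  unfold enorm2 at h
  nlinarith [h, h2]

lemma calN_neg (w : Fin 2 → ℝ) : calN (-w) = calN w := by
  ext F
  have hv : F.mulVec (-w) = -(F.mulVec w) := by
    funext i; simp only [mulVec2, Pi.neg_apply]; ring
  unfold calN enorm2
  simp [hv, Pi.neg_apply]
  intro _; constructor <;> intro h <;> nlinarith [h]

lemma exists_small (A B C : ℝ) (hA : 0 < A) (hC : 0 < C) (h : A*C - B^2 = 1) :
    ∃ x y : ℝ, 1 ≤ x^2 + y^2 ∧ A*x^2 + 2*B*x*y + C*y^2 ≤ 1 := by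
  rcases le_or_gt A 1 with h1 | h1
  · exact ⟨1, 0, by norm_num, by nlinarith⟩
  rcases le_or_gt C 1 with h2 | h2
  · exact ⟨0, 1, by norm_num, by nlinarith⟩
  · set D := Real.sqrt (A + C - 2) with hDdef
    have hD2 : D^2 = A + C - 2 := Real.sq_sqrt (by nlinarith)
    have hA1 : A - 1 ≠ 0 := by nlinarith
    set u := (D - B)/(A - 1) with hu
    have hkey : (A-1)*u^2 + 2*B*u + (C-1) = 0 := by
      rw [hu]
      field_simp
      nlinarith [hD2, h]
    have hr : 0 < u^2 + 1 := by positivity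
    set g := Real.sqrt (u^2+1) with hg
    have hg2 : g^2 = u^2 + 1 := Real.sq_sqrt (by positivity)
    have hgpos : 0 < g := Real.sqrt_pos.mpr hr
    refine ⟨u/g, 1/g, ?_, ?_⟩
    · have : (u/g)^2 + (1/g)^2 = (u^2+1)/g^2 := by ring
      rw [this, hg2]
      rw [div_self (by positivity)]
    · have heq : A*(u/g)^2 + 2*B*(u/g)*(1/g) + C*(1/g)^2 = (A*u^2 + 2*B*u + C)/g^2 := by
        ring
      rw [heq, hg2]
      rw [div_le_one hr]
      nlinarith [hkey]

lemma key (s t : Fin 2 → ℝ) (F : M2) (hF : F.det = 1)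
    (hk0 : s 0 * t 1 - s 1 * t 0 ≠ 0)
    (u : ℝ) (hu1 : -1 ≤ u) (hu2 : u ≤ 0)
    (hQ : enorm2 (F.mulVec (fun i => s i + u * (s i - t i))) ≤ 1) :
    ∃ Fp Fm : M2, Fp ∈ calN s ∪ calN t ∧ Fm ∈ calN s ∪ calN t ∧
      ∃ lam : ℝ, 0 ≤ lam ∧ lam ≤ 1 ∧ F = lam • Fp + (1 - lam) • Fm ∧
        (Fp - Fm).rank ≤ 1 := by
  have hFd : F 0 0 * F 1 1 - F 0 1 * F 1 0 = 1 := by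
    rw [Matrix.det_fin_two] at hF; linarith
  set k := s 0 * t 1 - s 1 * t 0 with hk
  set v : Fin 2 → ℝ := fun i => s i - t i with hv
  set m : Fin 2 → ℝ := ![-(v 1), v 0] with hm
  have hm0 : m 0 = -(v 1) := rfl
  have hm1 : m 1 = v 0 := rfl
  set R : M2 := Matrix.vecMulVec (F.mulVec v) m with hR
  have hRe : ∀ i j, R i j = (F i 0 * v 0 + F i 1 * v 1) * m j := by
    intro i j
    rw [hR, Matrix.vecMulVec_apply, mulVec2]
  have hdet : ∀ τ : ℝ, (F + τ • R).det = 1 := by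
    intro τ
    rw [Matrix.det_fin_two]
    simp only [Matrix.add_apply, Matrix.smul_apply, smul_eq_mul, hRe, hm0, hm1, hv]
    linear_combination hFd
  have hmv : ∀ (τ : ℝ) (w : Fin 2 → ℝ) (i : Fin 2),
      (F + τ • R).mulVec w i
        = F.mulVec w i + τ * (F i 0 * v 0 + F i 1 * v 1) * (m 0 * w 0 + m 1 * w 1) := by
    intro τ w i
    rw [mulVec2, mulVec2]
    simp only [Matrix.add_apply, Matrix.smul_apply, smul_eq_mul, hRe]
    ring
  refine ⟨F + ((u+1)/k) • R, F + (u/k) • R, Or.inr ⟨hdet _, ?_⟩, Or.inl ⟨hdet _, ?_⟩,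
    -u, by linarith, by linarith, ?_, ?_⟩
  · -- ‖Fp t‖ ≤ 1
    have hveq : (F + ((u+1)/k) • R).mulVec t = F.mulVec (fun i => s i + u * (s i - t i)) := by
      funext i
      rw [hmv, mulVec2, mulVec2]
      simp only [hm0, hm1, hv]
      field_simp
      ring
    rw [hveq]; exact hQ
  · -- ‖Fm s‖ ≤ 1
    have hveq : (F + (u/k) • R).mulVec s = F.mulVec (fun i => s i + u * (s i - t i)) := by
      funext i
      rw [hmv, mulVec2, mulVec2]
      simp only [hm0, hm1, hv]
      field_simp
      ring
    rw [hveq]; exact hQ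
  · -- convex combination
    ext i j
    simp only [Matrix.add_apply, Matrix.smul_apply, smul_eq_mul]
    field_simp
    ring
  · -- rank
    have heq : (F + ((u+1)/k) • R) - (F + (u/k) • R) = Matrix.vecMulVec ((1/k) • (F.mulVec v)) m := by
      ext i j
      simp only [Matrix.sub_apply, Matrix.add_apply, Matrix.smul_apply, smul_eq_mul,
        Matrix.vecMulVec_apply, hRe, Pi.smul_apply, mulVec2]
      field_simp
      ring
    rw [heq, Matrix.vecMulVec_eq (Fin 1)]
    exact (Matrix.rank_mul_le_left _ _).trans
      ((Matrix.rank_le_card_width (Matrix.replicateCol (Fin 1) ((1/k) • (F.mulVec v)))).trans (by simp))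

lemma one_le_add (a b d x y : ℝ) (ha : 0 ≤ a) (hb : 0 ≤ b) (hd : d ≤ 1)
    (hxy : 1 ≤ x^2 + y^2) (he : x^2 + y^2 = a^2 + b^2 + 2*a*b*d) : 1 ≤ a + b := by
  nlinarith [mul_nonneg ha hb, sq_nonneg (a+b)]

lemma case_key (s t : Fin 2 → ℝ) (F : M2) (hF : F.det = 1)
    (hk0 : s 0 * t 1 - s 1 * t 0 ≠ 0)
    (A' B' x y : ℝ) (hA' : 0 ≤ A') (hB' : 0 ≤ B') (hAB : 1 ≤ A' + B')
    (hx : A' * s 0 + B' * t 0 = x) (hy : A' * s 1 + B' * t 1 = y)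
    (hQ2 : (F 0 0 * x + F 0 1 * y)^2 + (F 1 0 * x + F 1 1 * y)^2 ≤ 1) :
    ∃ Fp Fm : M2, Fp ∈ calN s ∪ calN t ∧ Fm ∈ calN s ∪ calN t ∧
      ∃ lam : ℝ, 0 ≤ lam ∧ lam ≤ 1 ∧ F = lam • Fp + (1 - lam) • Fm ∧
        (Fp - Fm).rank ≤ 1 := by
  have hABpos : (0:ℝ) < A' + B' := lt_of_lt_of_le one_pos hAB
  set u := -B'/(A'+B') with hu
  apply key s t F hF hk0 u
  · rw [hu, neg_div, neg_le, neg_neg, div_le_one hABpos]; linarith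
  · rw [hu, neg_div, neg_nonpos]; positivity
  · rw [enorm2_le_one_iff]
    have hne : A' + B' ≠ 0 := hABpos.ne'
    have e0 : F.mulVec (fun i => s i + u * (s i - t i)) 0
        = (F 0 0 * x + F 0 1 * y)/(A'+B') := by
      rw [mulVec2, ← hx, ← hy, hu]
      field_simp
      ring
    have e1 : F.mulVec (fun i => s i + u * (s i - t i)) 1
        = (F 1 0 * x + F 1 1 * y)/(A'+B') := by
      rw [mulVec2, ← hx, ← hy, hu]
      field_simp
      ring
    rw [e0, e1, div_pow, div_pow, ← add_div, div_le_one (by positivity)]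
    nlinarith [hQ2, hAB]

set_option maxHeartbeats 1000000 in
/-- Every F with det F = 1 is a convex combination of two rank-one connected
matrices F₊, F₋ ∈ 𝓝_s ∪ 𝓝_{s′}. -/
theorem stmt6 (s s' : Fin 2 → ℝ) (hs : enorm2 s = 1) (hs' : enorm2 s' = 1)
    (h1 : s' ≠ s) (h2 : s' ≠ -s) (F : M2) (hF : F.det = 1) :
    ∃ Fp Fm : M2, Fp ∈ calN s ∪ calN s' ∧ Fm ∈ calN s ∪ calN s' ∧
      ∃ lam : ℝ, 0 ≤ lam ∧ lam ≤ 1 ∧ F = lam • Fp + (1 - lam) • Fm ∧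
        (Fp - Fm).rank ≤ 1 := by

  have hs2 := enorm2_eq_one s hs
  have hs'2 := enorm2_eq_one s' hs'
  have hFd : F 0 0 * F 1 1 - F 0 1 * F 1 0 = 1 := by
    rw [Matrix.det_fin_two] at hF; linarith
  -- the cross product is nonzero
  have hk0 : s 0 * s' 1 - s 1 * s' 0 ≠ 0 := by
    intro h
    have hd : (s 0 * s' 0 + s 1 * s' 1 - 1) * (s 0 * s' 0 + s 1 * s' 1 + 1) = 0 := by
      linear_combination (s' 0^2 + s' 1^2) * hs2 + hs'2 - (s 0 * s' 1 - s 1 * s' 0) * h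
    rcases mul_eq_zero.mp hd with hd1 | hd1
    · apply h1
      have e0 : s' 0 = s 0 := by linear_combination s 0 * hd1 - s' 0 * hs2 - s 1 * h
      have e1 : s' 1 = s 1 := by linear_combination s 1 * hd1 - s' 1 * hs2 + s 0 * h
      funext i
      fin_cases i
      · exact e0
      · exact e1
    · apply h2
      have e0 : s' 0 = -(s 0) := by linear_combination s 0 * hd1 - s' 0 * hs2 - s 1 * h
      have e1 : s' 1 = -(s 1) := by linear_combination s 1 * hd1 - s' 1 * hs2 + s 0 * h
      funext i
      fin_cases i
      · exact e0
      · exact e1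
  set A := F 0 0^2 + F 1 0^2 with hAdef
  set B := F 0 0 * F 0 1 + F 1 0 * F 1 1 with hBdef
  set C := F 0 1^2 + F 1 1^2 with hCdef
  have hAC : A*C - B^2 = 1 := by
    rw [hAdef, hBdef, hCdef]
    linear_combination (F 0 0 * F 1 1 - F 0 1 * F 1 0 + 1) * hFd
  have hA : 0 < A := by
    rcases eq_or_lt_of_le (by positivity : (0:ℝ) ≤ A) with h0 | h0
    · exfalso
      have h3 := hAC
      rw [← h0, zero_mul] at h3
      nlinarith [sq_nonneg B]
    · exact h0
  have hC : 0 < C := by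
    rcases eq_or_lt_of_le (by positivity : (0:ℝ) ≤ C) with h0 | h0
    · exfalso
      have h3 := hAC
      rw [← h0, mul_zero] at h3
      nlinarith [sq_nonneg B]
    · exact h0
  obtain ⟨x, y, hxy, hQxy⟩ := exists_small A B C hA hC hAC
  have hexp : A*x^2 + 2*B*x*y + C*y^2
      = (F 0 0 * x + F 0 1 * y)^2 + (F 1 0 * x + F 1 1 * y)^2 := by
    rw [hAdef, hBdef, hCdef]; ring
  have hQ2 : (F 0 0 * x + F 0 1 * y)^2 + (F 1 0 * x + F 1 1 * y)^2 ≤ 1 := by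
    rw [← hexp]; exact hQxy
  have hQ2' : (F 0 0 * (-x) + F 0 1 * (-y))^2 + (F 1 0 * (-x) + F 1 1 * (-y))^2 ≤ 1 := by
    have : (F 0 0 * (-x) + F 0 1 * (-y))^2 + (F 1 0 * (-x) + F 1 1 * (-y))^2
        = (F 0 0 * x + F 0 1 * y)^2 + (F 1 0 * x + F 1 1 * y)^2 := by ring
    rw [this]; exact hQ2
  set k := s 0 * s' 1 - s 1 * s' 0 with hkdef
  obtain ⟨α, hαdef⟩ : ∃ a : ℝ, a = (x * s' 1 - y * s' 0)/k := ⟨_, rfl⟩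
  obtain ⟨β, hβdef⟩ : ∃ b : ℝ, b = (s 0 * y - s 1 * x)/k := ⟨_, rfl⟩
  have hx : α * s 0 + β * s' 0 = x := by
    rw [hαdef, hβdef]
    field_simp
    ring
  have hy : α * s 1 + β * s' 1 = y := by
    rw [hαdef, hβdef]
    field_simp
    ring
  have hd2 : (s 0 * s' 0 + s 1 * s' 1)^2 ≤ 1 := by
    nlinarith [hs2, hs'2, sq_nonneg (s 0 * s' 1 - s 1 * s' 0)]
  have hdle : s 0 * s' 0 + s 1 * s' 1 ≤ 1 := by
    nlinarith [hd2, sq_nonneg (s 0 * s' 0 + s 1 * s' 1 - 1)]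
  have hdge : -1 ≤ s 0 * s' 0 + s 1 * s' 1 := by
    nlinarith [hd2, sq_nonneg (s 0 * s' 0 + s 1 * s' 1 + 1)]
  have hxy2 : x^2 + y^2 = α^2 + β^2 + 2*α*β*(s 0 * s' 0 + s 1 * s' 1) := by
    calc x^2 + y^2 = (α * s 0 + β * s' 0)^2 + (α * s 1 + β * s' 1)^2 := by rw [hx, hy]
      _ = α^2*(s 0^2 + s 1^2) + β^2*(s' 0^2 + s' 1^2)
          + 2*α*β*(s 0 * s' 0 + s 1 * s' 1) := by ring
      _ = α^2 + β^2 + 2*α*β*(s 0 * s' 0 + s 1 * s' 1) := by rw [hs2, hs'2]; ring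
  have hk0' : s 0 * (-s') 1 - s 1 * (-s') 0 ≠ 0 := by
    simp only [Pi.neg_apply]
    intro h
    apply hk0
    linarith
  rcases le_total 0 α with ha | ha <;> rcases le_total 0 β with hb | hb
  · -- both nonneg : t = s'
    refine case_key s s' F hF hk0 α β x y ha hb ?_ hx hy hQ2
    exact one_le_add α β _ x y ha hb hdle hxy hxy2
  · -- α ≥ 0, β ≤ 0 : t = -s'
    rw [← calN_neg s']
    refine case_key s (-s') F hF hk0' α (-β) x y ha (by linarith) ?_ ?_ ?_ hQ2
    · exact one_le_add α (-β) (-(s 0 * s' 0 + s 1 * s' 1)) x y ha (by linarith)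
        (by linarith) hxy (by linear_combination hxy2)
    · simp only [Pi.neg_apply]; linarith [hx]
    · simp only [Pi.neg_apply]; linarith [hy]
  · -- α ≤ 0, β ≥ 0 : t = -s', negate
    rw [← calN_neg s']
    refine case_key s (-s') F hF hk0' (-α) β (-x) (-y) (by linarith) hb ?_ ?_ ?_ hQ2'
    · exact one_le_add (-α) β (-(s 0 * s' 0 + s 1 * s' 1)) x y (by linarith) hb
        (by linarith) hxy (by linear_combination hxy2)
    · simp only [Pi.neg_apply]; linarith [hx]
    · simp only [Pi.neg_apply]; linarith [hy]
  · -- both nonpos : t = s', negate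
    refine case_key s s' F hF hk0 (-α) (-β) (-x) (-y) (by linarith) (by linarith) ?_
      (by linarith [hx]) (by linarith [hy]) hQ2'
    exact one_le_add (-α) (-β) _ x y (by linarith) (by linarith) hdle hxy
      (by linear_combination hxy2)
end
end

section
/- Let θ ∈ (0,π) and F ∈ ℝ^{2×2}. Then F ∈ 𝓝 and F R_θ ∈ 𝓝 if and only if there exist S ∈ SO(2), β ∈ [sin θ, 1] and γ ∈ ℝ with γ₋(θ,β) ≤ γ ≤ γ₊(θ,β) such that F = S ψ(β,γ), where ψ(β,γ) is the 2×2 matrix with rows (β, γ) and (0, 1/β), and γ_±(θ,β) = −β·(cos θ/sin θ) ± √(1/sin²θ − 1/β²). -/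
open Matrix Real Set MeasureTheory

noncomputable section

/-- ψ(β,γ) = matrix with rows (β, γ) and (0, 1/β). -/
def psiM (β γ : ℝ) : M2 := !![β, γ; 0, 1 / β]

/-- γ₋(θ,β) = −β cot θ − √(1/sin²θ − 1/β²). -/
def gammaMinus (θ β : ℝ) : ℝ :=
  -β * (Real.cos θ / Real.sin θ) - Real.sqrt (1 / (Real.sin θ) ^ 2 - 1 / β ^ 2)

/-- γ₊(θ,β) = −β cot θ + √(1/sin²θ − 1/β²). -/
def gammaPlus (θ β : ℝ) : ℝ :=
  -β * (Real.cos θ / Real.sin θ) + Real.sqrt (1 / (Real.sin θ) ^ 2 - 1 / β ^ 2)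

lemma exists_angle (x y : ℝ) (h : x^2 + y^2 = 1) :
    ∃ φ : ℝ, Real.cos φ = x ∧ Real.sin φ = y := by
  have hz : (⟨x, y⟩ : ℂ) ≠ 0 := by
    intro h0; rw [Complex.ext_iff] at h0; simp at h0; nlinarith [h0.1, h0.2]
  have habs : ‖(⟨x, y⟩ : ℂ)‖ = 1 := by
    rw [Complex.norm_def, Complex.normSq_mk]; rw [show x*x+y*y = 1 by nlinarith]; simp
  refine ⟨Complex.arg ⟨x, y⟩, ?_, ?_⟩
  · rw [Complex.cos_arg hz, habs]; simp
  · rw [Complex.sin_arg, habs]; simp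

lemma mul_rot_psi (φ β γ : ℝ) : rot φ * psiM β γ =
    !![Real.cos φ*β, Real.cos φ*γ - Real.sin φ*(1/β);
       Real.sin φ*β, Real.sin φ*γ + Real.cos φ*(1/β)] := by
  ext i j; fin_cases i <;> fin_cases j <;>
    simp [rot, psiM, Matrix.mul_apply, Fin.sum_univ_two] <;> ring

lemma enorm2_e1 (M : M2) : enorm2 (M.mulVec e1) = Real.sqrt ((M 0 0)^2 + (M 1 0)^2) := by
  simp [enorm2, Matrix.mulVec, dotProduct, Fin.sum_univ_two, e1]

lemma enorm2_mul_rot (F : M2) (θ : ℝ) : enorm2 ((F * rot θ).mulVec e1) =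
    Real.sqrt ((F 0 0 * Real.cos θ + F 0 1 * Real.sin θ)^2 +
      (F 1 0 * Real.cos θ + F 1 1 * Real.sin θ)^2) := by
  simp [enorm2, Matrix.mulVec, dotProduct, Fin.sum_univ_two, e1, rot, Matrix.mul_apply]

set_option maxHeartbeats 1000000 in
/-- Explicit characterization of 𝓝 ∩ 𝓝 R_θᵀ. -/
theorem stmt7 (θ : ℝ) (hθ : θ ∈ Set.Ioo 0 Real.pi) (F : M2) :
    (F ∈ calN e1 ∧ F * rot θ ∈ calN e1) ↔
      ∃ S ∈ SO2, ∃ β γ : ℝ, Real.sin θ ≤ β ∧ β ≤ 1 ∧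
        gammaMinus θ β ≤ γ ∧ γ ≤ gammaPlus θ β ∧ F = S * psiM β γ := by
  obtain ⟨hθ0, hθπ⟩ := hθ
  have hsin : 0 < Real.sin θ := Real.sin_pos_of_pos_of_lt_pi hθ0 hθπ
  constructor
  · rintro ⟨⟨hdet, hn1⟩, ⟨_, hn2⟩⟩
    rw [Matrix.det_fin_two] at hdet
    rw [enorm2_e1, Real.sqrt_le_one] at hn1
    rw [enorm2_mul_rot, Real.sqrt_le_one] at hn2
    set a := F 0 0 with ha; set b := F 0 1 with hb; set c := F 1 0 with hc; set d := F 1 1 with hd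
    have hβpos : 0 < a^2 + c^2 := by
      by_contra h
      push_neg at h
      have ha0 : a = 0 := by nlinarith [sq_nonneg a, sq_nonneg c]
      have hc0 : c = 0 := by nlinarith [sq_nonneg a, sq_nonneg c]
      rw [ha0, hc0] at hdet; norm_num at hdet
    set β := Real.sqrt (a^2 + c^2) with hβdef
    have hβ : 0 < β := Real.sqrt_pos.2 hβpos
    have hβ2 : β^2 = a^2 + c^2 := Real.sq_sqrt hβpos.le
    clear_value β
    obtain ⟨φ, hcos, hsinφ⟩ := exists_angle (a/β) (c/β) (by field_simp; linarith [hβ2])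
    set γ := (a*b + c*d)/β with hγdef
    have hγ : γ * β = a*b + c*d := by rw [hγdef]; field_simp
    have hF : F = rot φ * psiM β γ := by
      rw [mul_rot_psi, hcos, hsinφ]
      ext i j
      fin_cases i <;> fin_cases j <;>
        simp only [Matrix.cons_val_zero, Matrix.cons_val_one, Matrix.head_cons,
          Matrix.cons_val', Matrix.empty_val', Matrix.cons_val_fin_one, Matrix.head_fin_const, Fin.zero_eta, Fin.mk_one, Matrix.of_apply,
          ← ha, ← hb, ← hc, ← hd]
      · field_simp
      · rw [hγdef]; field_simp; linear_combination b*hβ2 - c*hdet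
      · field_simp
      · rw [hγdef]; field_simp; linear_combination d*hβ2 + a*hdet
    have hid : (β*Real.cos θ + γ*Real.sin θ)^2 * β^2 + (Real.sin θ)^2
        = ((a*Real.cos θ + b*Real.sin θ)^2 + (c*Real.cos θ + d*Real.sin θ)^2) * β^2 := by
      have e : (β*Real.cos θ + γ*Real.sin θ)^2 * β^2
          = (β^2*Real.cos θ + (γ*β)*Real.sin θ)^2 := by ring
      rw [e, hβ2, hγ]
      linear_combination (-(Real.sin θ)^2 * (1 + (a*d - b*c))) * hdet
    have key2 : (β*Real.cos θ + γ*Real.sin θ)^2 * β^2 + (Real.sin θ)^2 ≤ β^2 := by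
      nlinarith [hid, hn2, sq_nonneg β, hβ]
    have hβ1 : β ≤ 1 := by nlinarith [hβ2, hn1, hβ]
    have hsinβ : Real.sin θ ≤ β := by
      nlinarith [key2, sq_nonneg ((β*Real.cos θ + γ*Real.sin θ)*β), hsin, hβ]
    have hc1 : (γ + β*(Real.cos θ/Real.sin θ)) * Real.sin θ = β*Real.cos θ + γ*Real.sin θ := by
      field_simp; ring
    have h3 : (γ + β*(Real.cos θ/Real.sin θ))^2 * ((Real.sin θ)^2 * β^2)
        ≤ β^2 - (Real.sin θ)^2 := by
      have e : (γ + β*(Real.cos θ/Real.sin θ))^2 * ((Real.sin θ)^2 * β^2)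
          = ((γ + β*(Real.cos θ/Real.sin θ)) * Real.sin θ)^2 * β^2 := by ring
      rw [e, hc1]; linarith [key2]
    have hD : (γ + β*(Real.cos θ/Real.sin θ))^2 ≤ 1/(Real.sin θ)^2 - 1/β^2 := by
      have hpos : 0 < (Real.sin θ)^2 * β^2 := by positivity
      rw [show 1/(Real.sin θ)^2 - 1/β^2 = (β^2 - (Real.sin θ)^2)/((Real.sin θ)^2 * β^2) from by
        field_simp; try ring, le_div_iff₀ hpos]
      exact h3
    have habs : |γ + β*(Real.cos θ/Real.sin θ)| ≤ Real.sqrt (1/(Real.sin θ)^2 - 1/β^2) :=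
      Real.abs_le_sqrt hD
    rw [abs_le] at habs
    exact ⟨rot φ, ⟨φ, rfl⟩, β, γ, hsinβ, hβ1,
      by unfold gammaMinus; linarith [habs.1], by unfold gammaPlus; linarith [habs.2], hF⟩
  · rintro ⟨S, ⟨φ, rfl⟩, β, γ, hβl, hβu, hγl, hγu, rfl⟩
    have hβ : 0 < β := lt_of_lt_of_le hsin hβl
    have hpyth : Real.cos φ^2 + Real.sin φ^2 = 1 := Real.cos_sq_add_sin_sq φ
    rw [mul_rot_psi]
    set E : M2 := !![Real.cos φ*β, Real.cos φ*γ - Real.sin φ*(1/β);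
       Real.sin φ*β, Real.sin φ*γ + Real.cos φ*(1/β)] with hE
    have hdet : E.det = 1 := by
      rw [hE, Matrix.det_fin_two_of]
      field_simp
      linear_combination hpyth
    have hE00 : E 0 0 = Real.cos φ*β := by rw [hE]; norm_num
    have hE01 : E 0 1 = Real.cos φ*γ - Real.sin φ*(1/β) := by rw [hE]; norm_num
    have hE10 : E 1 0 = Real.sin φ*β := by rw [hE]; norm_num
    have hE11 : E 1 1 = Real.sin φ*γ + Real.cos φ*(1/β) := by rw [hE]; norm_num
    have hsinβ2 : (Real.sin θ)^2 ≤ β^2 := by nlinarith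
    have hDnn : 0 ≤ 1/(Real.sin θ)^2 - 1/β^2 := by
      rw [sub_nonneg]
      exact one_div_le_one_div_of_le (by positivity) hsinβ2
    unfold gammaMinus at hγl; unfold gammaPlus at hγu
    have hsq : (γ + β*(Real.cos θ/Real.sin θ))^2 ≤ 1/(Real.sin θ)^2 - 1/β^2 := by
      nlinarith [Real.sq_sqrt hDnn, Real.sqrt_nonneg (1/(Real.sin θ)^2 - 1/β^2), hγl, hγu]
    have hc1 : (γ + β*(Real.cos θ/Real.sin θ)) * Real.sin θ = β*Real.cos θ + γ*Real.sin θ := by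
      field_simp; ring
    have main : (β*Real.cos θ + γ*Real.sin θ)^2 + (Real.sin θ/β)^2 ≤ 1 := by
      have h4 : (β*Real.cos θ + γ*Real.sin θ)^2
          ≤ (1/(Real.sin θ)^2 - 1/β^2) * (Real.sin θ)^2 := by
        rw [← hc1, mul_pow]
        exact mul_le_mul_of_nonneg_right hsq (sq_nonneg _)
      have h5 : (1/(Real.sin θ)^2 - 1/β^2) * (Real.sin θ)^2 = 1 - (Real.sin θ/β)^2 := by
        field_simp
      linarith
    refine ⟨⟨hdet, ?_⟩, ⟨?_, ?_⟩⟩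
    · rw [enorm2_e1, hE00, hE10]
      rw [show (Real.cos φ*β)^2 + (Real.sin φ*β)^2 = β^2 from by linear_combination β^2 * hpyth]
      rw [Real.sqrt_sq hβ.le]; exact hβu
    · rw [Matrix.det_mul, hdet, one_mul, rot, Matrix.det_fin_two_of]
      linear_combination Real.cos_sq_add_sin_sq θ
    · rw [enorm2_mul_rot, Real.sqrt_le_one, hE00, hE01, hE10, hE11]
      calc _ = (β*Real.cos θ + γ*Real.sin θ)^2 + (Real.sin θ/β)^2 := by
              field_simp
              linear_combination (β^2*γ^2*Real.sin θ^2 + 2*β^3*Real.cos θ*γ*Real.sin θ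
                + β^4*Real.cos θ^2 + Real.sin θ^2) * hpyth
        _ ≤ 1 := main
end
end

section
/- For all real angles θ̃, θ with 0 < θ̃ < θ ≤ π/2, the set 𝓝 ∩ {F ∈ ℝ^{2×2} : F R_θ ∈ 𝓝} is a proper subset of 𝓝 ∩ {F ∈ ℝ^{2×2} : F R_{θ̃} ∈ 𝓝}. -/
open Matrix Real Set MeasureTheory

noncomputable section

lemma mulVec_e1 (F : M2) : F.mulVec e1 = ![F 0 0, F 1 0] := by
  funext i
  fin_cases i <;> simp [Matrix.mulVec, dotProduct, Fin.sum_univ_two, e1]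

lemma rot_mulVec_e1 (φ : ℝ) : (rot φ).mulVec e1 = ![Real.cos φ, Real.sin φ] := by
  rw [rot, mulVec_e1]; simp

lemma mul_rot_mulVec_e1 (F : M2) (φ : ℝ) :
    (F * rot φ).mulVec e1 = ![F 0 0 * Real.cos φ + F 0 1 * Real.sin φ,
      F 1 0 * Real.cos φ + F 1 1 * Real.sin φ] := by
  rw [← Matrix.mulVec_mulVec, rot_mulVec_e1]
  funext i
  fin_cases i <;> simp [Matrix.mulVec, dotProduct, Fin.sum_univ_two]

set_option maxHeartbeats 2000000 in
lemma key_s8 (a b c d cθ sθ ct st : ℝ) (hdet : a*d - b*c = 1)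
    (hsθ : 0 < sθ) (hst : 0 < st) (hcθ : 0 ≤ cθ) (hA : 0 ≤ sθ*ct - cθ*st)
    (hpyθ : cθ^2 + sθ^2 = 1) (hpyt : ct^2 + st^2 = 1)
    (hx : a^2 + c^2 ≤ 1) (hy : (a*cθ + b*sθ)^2 + (c*cθ + d*sθ)^2 ≤ 1) :
    (a*ct + b*st)^2 + (c*ct + d*st)^2 ≤ 1 := by
  have hX : (0:ℝ) ≤ a^2 + c^2 := by positivity
  have hY : (0:ℝ) ≤ (a*cθ + b*sθ)^2 + (c*cθ + d*sθ)^2 := by positivity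
  have hXY : (a^2+c^2) * ((a*cθ+b*sθ)^2+(c*cθ+d*sθ)^2) ≤ 1 := mul_le_one₀ hx hY hy
  have lag : (a*(a*cθ+b*sθ) + c*(c*cθ+d*sθ))^2
      = (a^2+c^2) * ((a*cθ+b*sθ)^2+(c*cθ+d*sθ)^2) - sθ^2*(a*d-b*c)^2 := by ring
  have hp2 : (a*(a*cθ+b*sθ) + c*(c*cθ+d*sθ))^2 ≤ cθ^2 := by
    rw [lag, hdet]; nlinarith [hXY, hpyθ]
  have hple : a*(a*cθ+b*sθ) + c*(c*cθ+d*sθ) ≤ cθ := by nlinarith [hp2, hcθ]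
  have e1' : ((sθ*ct-cθ*st)^2)*(a^2+c^2) ≤ (sθ*ct-cθ*st)^2 := by
    nlinarith [sq_nonneg (sθ*ct-cθ*st)]
  have e2' : st^2*((a*cθ+b*sθ)^2+(c*cθ+d*sθ)^2) ≤ st^2 := by nlinarith [sq_nonneg st]
  have h0 : 0 ≤ 2*((sθ*ct-cθ*st)*st) := by positivity
  have e3' := mul_le_mul_of_nonneg_left hple h0
  have h2 : (sθ*ct-cθ*st)^2 + 2*(sθ*ct-cθ*st)*st*cθ + st^2 = sθ^2 := by
    linear_combination sθ^2*hpyt - st^2*hpyθ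
  have hfin : sθ^2*((a*ct + b*st)^2 + (c*ct + d*st)^2) ≤ sθ^2 := by
    linarith [e1', e2', e3', h2]
  nlinarith [hfin, mul_pos hsθ hsθ]

/-- The sets 𝓝 ∩ 𝓝 R_θᵀ are strictly decreasing in θ on (0, π/2]. -/
theorem stmt8 (θt θ : ℝ) (h1 : 0 < θt) (h2 : θt < θ) (h3 : θ ≤ Real.pi / 2) :
    (calN e1 ∩ {F : M2 | F * rot θ ∈ calN e1}) ⊂
      (calN e1 ∩ {F : M2 | F * rot θt ∈ calN e1}) := by
  have hpi : Real.pi / 2 < Real.pi := by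
    have := Real.pi_pos; linarith
  have hst : 0 < Real.sin θt := Real.sin_pos_of_pos_of_lt_pi h1 (by linarith)
  have hsθ : 0 < Real.sin θ := Real.sin_pos_of_pos_of_lt_pi (by linarith) (by linarith)
  have hcθ : 0 ≤ Real.cos θ := Real.cos_nonneg_of_mem_Icc ⟨by linarith, h3⟩
  have hct : 0 < Real.cos θt := Real.cos_pos_of_mem_Ioo ⟨by linarith, by linarith⟩
  have hA : 0 < Real.sin θ * Real.cos θt - Real.cos θ * Real.sin θt := by
    have := Real.sin_pos_of_pos_of_lt_pi (x := θ - θt) (by linarith) (by linarith)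
    rwa [Real.sin_sub] at this
  have hrotdet : ∀ φ : ℝ, (rot φ).det = 1 := by
    intro φ
    rw [rot, Matrix.det_fin_two_of]
    nlinarith [Real.sin_sq_add_cos_sq φ]
  rw [Set.ssubset_def]
  constructor
  · rintro F ⟨⟨hFdet, hFn⟩, ⟨-, hFθn⟩⟩
    refine ⟨⟨hFdet, hFn⟩, ⟨by rw [Matrix.det_mul, hFdet, hrotdet, one_mul], ?_⟩⟩
    rw [mul_rot_mulVec_e1] at hFθn ⊢
    rw [mulVec_e1] at hFn
    rw [enorm2_le_one_iff] at hFθn hFn ⊢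
    simp only [Matrix.cons_val_zero, Matrix.cons_val_one, Matrix.head_cons] at hFθn hFn ⊢
    exact key_s8 (F 0 0) (F 0 1) (F 1 0) (F 1 1) (Real.cos θ) (Real.sin θ)
      (Real.cos θt) (Real.sin θt)
      (by rw [Matrix.det_fin_two] at hFdet; linarith) hsθ hst hcθ hA.le
      (by nlinarith [Real.sin_sq_add_cos_sq θ]) (by nlinarith [Real.sin_sq_add_cos_sq θt])
      hFn hFθn
  · intro hsub
    set k : ℝ := -2*Real.cos θt/Real.sin θt with hk
    set F₀ : M2 := !![1, k; 0, 1] with hF₀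
    have h00 : F₀ 0 0 = 1 := by rw [hF₀]; simp
    have h01 : F₀ 0 1 = k := by rw [hF₀]; simp
    have h10 : F₀ 1 0 = 0 := by rw [hF₀]; simp
    have h11 : F₀ 1 1 = 1 := by rw [hF₀]; simp
    have hF₀det : F₀.det = 1 := by rw [Matrix.det_fin_two, h00, h01, h10, h11]; ring
    have hkst : k * Real.sin θt = -2*Real.cos θt := by
      rw [hk]; field_simp
    have hmem : F₀ ∈ calN e1 ∩ {F : M2 | F * rot θt ∈ calN e1} := by
      refine ⟨⟨hF₀det, ?_⟩, ⟨by rw [Matrix.det_mul, hF₀det, hrotdet, one_mul], ?_⟩⟩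
      · rw [mulVec_e1, h00, h10, enorm2_le_one_iff]
        norm_num
      · rw [mul_rot_mulVec_e1, h00, h01, h10, h11, enorm2_le_one_iff]
        simp only [Matrix.cons_val_zero, Matrix.cons_val_one, Matrix.head_cons]
        nlinarith [hkst, Real.sin_sq_add_cos_sq θt]
    obtain ⟨-, -, hle⟩ := hsub hmem
    rw [mul_rot_mulVec_e1, h00, h01, h10, h11, enorm2_le_one_iff] at hle
    simp only [Matrix.cons_val_zero, Matrix.cons_val_one, Matrix.head_cons] at hle
    -- hle : (1 * cos θ + k * sin θ)^2 + (0 * cos θ + 1 * sin θ)^2 ≤ 1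
    have hM : Real.sin θt * (1 * Real.cos θ + k * Real.sin θ)
        = Real.cos θ * Real.sin θt - 2*Real.cos θt * Real.sin θ := by
      rw [hk]; field_simp; ring
    have hsq : (Real.sin θt * (1 * Real.cos θ + k * Real.sin θ))^2
        ≤ Real.sin θt^2 * (1 - Real.sin θ^2) := by
      have hs2 : 0 ≤ Real.sin θt^2 := sq_nonneg _
      nlinarith [hle, hs2]
    rw [hM] at hsq
    nlinarith [hsq, hA, mul_pos hct hsθ, Real.sin_sq_add_cos_sq θ, Real.sin_sq_add_cos_sq θt]
end
end

section
/- Let N ≥ 2, let s₁,…,s_N ∈ ℝ² be unit vectors such that s_i and s_j are linearly independent for at least one pair i ≠ j, and let λ₁,…,λ_N > 0 with λ₁ + … + λ_N = 1. Then the Minkowski combination {λ₁ F₁ + … + λ_N F_N : F_i ∈ ℝ^{2×2} with ‖F_i s_i‖ ≤ 1 for all i} equals all of ℝ^{2×2}. -/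
open Matrix Real Set MeasureTheory

noncomputable section

lemma enorm2_zero : enorm2 0 = 0 := by
  simp [enorm2]

lemma det_ne_zero_of_li {a b : Fin 2 → ℝ} (h : LinearIndependent ℝ ![a, b]) :
    a 0 * b 1 - a 1 * b 0 ≠ 0 := by
  intro hd
  have hbne : b ≠ 0 := by
    have := h.ne_zero 1
    simpa using this
  rw [Fintype.linearIndependent_iff] at h
  have h1 := h ![b 1, -(a 1)] (by
    funext k
    fin_cases k <;>
      simp [Fin.sum_univ_two] <;> nlinarith [hd])
  have ha1 : a 1 = 0 := by have := h1 1; simpa using this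
  have hb1 : b 1 = 0 := by have := h1 0; simpa using this
  have h2 := h ![b 0, -(a 0)] (by
    funext k
    fin_cases k <;> simp [Fin.sum_univ_two, ha1, hb1] <;> ring)
  have hb0 : b 0 = 0 := by have := h2 0; simpa using this
  exact hbne (by funext m; fin_cases m <;> simp [hb0, hb1])

/-- The Minkowski combination ∑ λᵢ {F : ‖F sᵢ‖ ≤ 1} is all of ℝ^{2×2}
whenever some pair of the unit vectors sᵢ is linearly independent. -/
theorem stmt14 (N : ℕ) (hN : 2 ≤ N) (s : Fin N → Fin 2 → ℝ)
    (hs : ∀ i, enorm2 (s i) = 1)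
    (hind : ∃ i j, i ≠ j ∧ LinearIndependent ℝ ![s i, s j])
    (lam : Fin N → ℝ) (hlam : ∀ i, 0 < lam i) (hsum : ∑ i, lam i = 1) :
    {G : M2 | ∃ F : Fin N → M2, (∀ i, enorm2 ((F i).mulVec (s i)) ≤ 1) ∧
      G = ∑ i, lam i • F i} = Set.univ := by
  obtain ⟨i, j, hij, hli⟩ := hind
  ext G
  simp only [Set.mem_univ, iff_true, Set.mem_setOf_eq]
  set a := s i with ha
  set b := s j with hb
  have hd : a 0 * b 1 - a 1 * b 0 ≠ 0 := det_ne_zero_of_li hli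
  set d : ℝ := a 0 * b 1 - a 1 * b 0 with hdd
  set Qi : M2 := (1/d) • !![-(b 0 * a 1), b 0 * a 0; -(b 1 * a 1), b 1 * a 0] with hQi
  set Qj : M2 := (1/d) • !![a 0 * b 1, -(a 0 * b 0); a 1 * b 1, -(a 1 * b 0)] with hQj
  have hQia : Qi.mulVec a = 0 := by
    funext k
    fin_cases k <;>
      simp [hQi, Matrix.mulVec, dotProduct, Fin.sum_univ_two] <;> ring
  have hQjb : Qj.mulVec b = 0 := by
    funext k
    fin_cases k <;>
      simp [hQj, Matrix.mulVec, dotProduct, Fin.sum_univ_two] <;> ring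
  have hQsum : Qi + Qj = 1 := by
    ext k m
    fin_cases k <;> fin_cases m <;>
      simp [hQi, hQj, Matrix.one_apply] <;> field_simp <;> ring
  refine ⟨fun k => if k = i then (1/lam i) • (G * Qi) else
      if k = j then (1/lam j) • (G * Qj) else 0, fun k => ?_, ?_⟩
  · by_cases hki : k = i
    · subst hki
      beta_reduce
      rw [if_pos rfl, ← ha, Matrix.smul_mulVec, ← Matrix.mulVec_mulVec, hQia,
        Matrix.mulVec_zero, smul_zero, enorm2_zero]
      norm_num
    · by_cases hkj : k = j
      · subst hkj
        beta_reduce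
        rw [if_neg hki, if_pos rfl, ← hb, Matrix.smul_mulVec, ← Matrix.mulVec_mulVec,
          hQjb, Matrix.mulVec_zero, smul_zero, enorm2_zero]
        norm_num
      · beta_reduce
        rw [if_neg hki, if_neg hkj, Matrix.zero_mulVec, enorm2_zero]
        norm_num
  · have : ∀ k, lam k • (if k = i then (1/lam i) • (G * Qi) else
        if k = j then (1/lam j) • (G * Qj) else 0) =
        (if k = i then G * Qi else 0) + (if k = j then G * Qj else 0) := by
      intro k
      by_cases hki : k = i
      · subst hki
        rw [if_pos rfl, if_pos rfl, if_neg hij, smul_smul, one_div,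
          mul_inv_cancel₀ (hlam k).ne', one_smul, add_zero]
      · by_cases hkj : k = j
        · subst hkj
          rw [if_neg hki, if_pos rfl, if_neg hki, if_pos rfl, smul_smul, one_div,
            mul_inv_cancel₀ (hlam k).ne', one_smul, zero_add]
        · simp [hki, hkj]
    rw [Finset.sum_congr rfl (fun k _ => this k), Finset.sum_add_distrib,
      Finset.sum_ite_eq' Finset.univ i, Finset.sum_ite_eq' Finset.univ j]
    simp [← Matrix.mul_add, hQsum]
end
end
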